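/- arXiv:1806.00900 — 11 statements merged into one kernel-verified Lean document; each statement's English description precedes it below -/
import Mathlib

section
/- Suppose the loss depends on two consecutive layers only through their product (linear activation between them): L(A, B, θ) = G(B·A, θ) where A(t) ∈ ℝ^{a×b}, B(t) ∈ ℝ^{c×a}, θ(t) collects all other parameters, and G is differentiable. If A(t), B(t), θ(t) evolve under gradient flow, d/dt A = −∂L/∂A, d/dt B = −∂L/∂B, d/dt θ = −∂L/∂θ, then the a×a matrix A(t)A(t)ᵀ − B(t)ᵀB(t) is constant in t; equivalently, d/dt (A(t)A(t)ᵀ − B(t)ᵀB(t)) = 0 for all t. -/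
/-- Update a single entry of a matrix (given as a function of two indices). -/
def updEntry {m n : ℕ} (A : Fin m → Fin n → ℝ) (i : Fin m) (j : Fin n) (s : ℝ) :
    Fin m → Fin n → ℝ :=
  fun i' j' => if i' = i ∧ j' = j then s else A i' j'

/-- Matrix product of functions of two indices. -/
def matMul {m n p : ℕ} (B : Fin m → Fin n → ℝ) (A : Fin n → Fin p → ℝ) :
    Fin m → Fin p → ℝ :=
  fun i j => ∑ l, B i l * A l j

/-- If the (differentiable) loss depends on two consecutive layers `A ∈ ℝ^{a×b}`,
`B ∈ ℝ^{c×a}` only through their product, `L(A,B,θ) = G(B·A, θ)`, and `A, B, θ`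
evolve under gradient flow, then `AAᵀ − BᵀB` is conserved: each of its entries has
zero time derivative. -/
theorem gradient_flow_conserves_linear_balancedness {a b c k : ℕ}
    (G : (Fin c → Fin b → ℝ) → (Fin k → ℝ) → ℝ)
    (hG : Differentiable ℝ (fun p : (Fin c → Fin b → ℝ) × (Fin k → ℝ) => G p.1 p.2))
    (A : ℝ → Fin a → Fin b → ℝ) (B : ℝ → Fin c → Fin a → ℝ) (θ : ℝ → Fin k → ℝ)
    (hA : ∀ (t : ℝ) (i : Fin a) (j : Fin b),
      HasDerivAt (fun τ => A τ i j)
        (-(deriv (fun s => G (matMul (B t) (updEntry (A t) i j s)) (θ t)) (A t i j))) t)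
    (hB : ∀ (t : ℝ) (p : Fin c) (l : Fin a),
      HasDerivAt (fun τ => B τ p l)
        (-(deriv (fun s => G (matMul (updEntry (B t) p l s) (A t)) (θ t)) (B t p l))) t)
    (hθ : ∀ (t : ℝ) (q : Fin k),
      HasDerivAt (fun τ => θ τ q)
        (-(deriv (fun s => G (matMul (B t) (A t)) (Function.update (θ t) q s)) (θ t q))) t)
    (t : ℝ) (i i' : Fin a) :
    HasDerivAt
      (fun τ => (∑ j, A τ i j * A τ i' j) - ∑ p, B τ p i * B τ p i') 0 t := by
  classical
  set g : (Fin c → Fin b → ℝ) → ℝ := fun M => G M (θ t) with hg_def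
  have hg : Differentiable ℝ g := by
    have : Differentiable ℝ (fun M : Fin c → Fin b → ℝ => (M, θ t)) :=
      differentiable_id.prodMk (differentiable_const _)
    exact hG.comp this
  set M0 : Fin c → Fin b → ℝ := matMul (B t) (A t) with hM0
  set L : (Fin c → Fin b → ℝ) →L[ℝ] ℝ := fderiv ℝ g M0 with hL_def
  have hL : HasFDerivAt g L M0 := (hg M0).hasFDerivAt
  -- direction matrices
  set VA : Fin a → Fin b → Fin c → Fin b → ℝ :=
    fun l j p q => B t p l * (if q = j then 1 else 0) with hVA
  set VB : Fin c → Fin a → Fin c → Fin b → ℝ :=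
    fun p l p' q => (if p' = p then 1 else 0) * A t l q with hVB
  -- the A-derivatives
  have keyA : ∀ (l : Fin a) (j : Fin b),
      deriv (fun s => G (matMul (B t) (updEntry (A t) l j s)) (θ t)) (A t l j) = L (VA l j) := by
    intro l j
    have hφ : ∀ s, matMul (B t) (updEntry (A t) l j s)
        = M0 + (s - A t l j) • VA l j := by
      intro s
      funext p q
      simp only [hM0, matMul, updEntry, hVA, Pi.add_apply, Pi.smul_apply, smul_eq_mul]
      by_cases hq : q = j
      · subst hq
        simp only [and_true, mul_one]
        have : ∀ l' : Fin a, B t p l' * (if l' = l then s else A t l' q)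
            = B t p l' * A t l' q + (if l' = l then B t p l' * (s - A t l q) else 0) := by
          intro l'
          by_cases h : l' = l
          · subst h; rw [if_pos rfl, if_pos rfl]; ring
          · simp [h]
        rw [Finset.sum_congr rfl (fun l' _ => this l'), Finset.sum_add_distrib,
          Finset.sum_ite_eq' Finset.univ l (fun l' => B t p l' * (s - A t l q))]
        simp
        ring
      · simp [hq]
    have hφd : HasDerivAt (fun s => matMul (B t) (updEntry (A t) l j s)) (VA l j) (A t l j) := by
      have h1 : HasDerivAt (fun s : ℝ => M0 + (s - A t l j) • VA l j) (VA l j) (A t l j) := by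
        have := (((hasDerivAt_id (A t l j)).sub_const (A t l j)).smul_const (VA l j)).const_add M0
        simpa using this
      exact h1.congr_of_eventuallyEq (by filter_upwards with s; rw [hφ s])
    have hφ0 : matMul (B t) (updEntry (A t) l j (A t l j)) = M0 := by
      rw [hφ]; simp
    have hL' : HasFDerivAt g L (matMul (B t) (updEntry (A t) l j (A t l j))) := by
      rw [hφ0]; exact hL
    exact (hL'.comp_hasDerivAt (A t l j) hφd).deriv
  have keyB : ∀ (p : Fin c) (l : Fin a),
      deriv (fun s => G (matMul (updEntry (B t) p l s) (A t)) (θ t)) (B t p l) = L (VB p l) := by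
    intro p l
    have hφ : ∀ s, matMul (updEntry (B t) p l s) (A t)
        = M0 + (s - B t p l) • VB p l := by
      intro s
      funext p' q
      simp only [hM0, matMul, updEntry, hVB, Pi.add_apply, Pi.smul_apply, smul_eq_mul]
      by_cases hp : p' = p
      · subst hp
        simp only [true_and, mul_one]
        have : ∀ l' : Fin a, (if l' = l then s else B t p' l') * A t l' q
            = B t p' l' * A t l' q + (if l' = l then (s - B t p' l) * A t l' q else 0) := by
          intro l'
          by_cases h : l' = l
          · subst h; rw [if_pos rfl, if_pos rfl]; ring
          · simp [h]
        rw [Finset.sum_congr rfl (fun l' _ => this l'), Finset.sum_add_distrib,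
          Finset.sum_ite_eq' Finset.univ l (fun l' => (s - B t p' l) * A t l' q)]
        simp
      · simp [hp]
    have hφd : HasDerivAt (fun s => matMul (updEntry (B t) p l s) (A t)) (VB p l) (B t p l) := by
      have h1 : HasDerivAt (fun s : ℝ => M0 + (s - B t p l) • VB p l) (VB p l) (B t p l) := by
        have := (((hasDerivAt_id (B t p l)).sub_const (B t p l)).smul_const (VB p l)).const_add M0
        simpa using this
      exact h1.congr_of_eventuallyEq (by filter_upwards with s; rw [hφ s])
    have hφ0 : matMul (updEntry (B t) p l (B t p l)) (A t) = M0 := by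
      rw [hφ]; simp
    have hL' : HasFDerivAt g L (matMul (updEntry (B t) p l (B t p l)) (A t)) := by
      rw [hφ0]; exact hL
    exact (hL'.comp_hasDerivAt (B t p l) hφd).deriv
  -- assemble
  have hA' : ∀ (l : Fin a) (j : Fin b),
      HasDerivAt (fun τ => A τ l j) (-(L (VA l j))) t := by
    intro l j; have := hA t l j; rwa [keyA l j] at this
  have hB' : ∀ (p : Fin c) (l : Fin a),
      HasDerivAt (fun τ => B τ p l) (-(L (VB p l))) t := by
    intro p l; have := hB t p l; rwa [keyB p l] at this
  have h1 : HasDerivAt (fun τ => ∑ j, A τ i j * A τ i' j)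
      (∑ j, (-(L (VA i j)) * A t i' j + A t i j * (-(L (VA i' j))))) t :=
    HasDerivAt.fun_sum (fun j _ => (hA' i j).mul (hA' i' j))
  have h2 : HasDerivAt (fun τ => ∑ p, B τ p i * B τ p i')
      (∑ p, (-(L (VB p i)) * B t p i' + B t p i * (-(L (VB p i'))))) t :=
    HasDerivAt.fun_sum (fun p _ => (hB' p i).mul (hB' p i'))
  have h3 := h1.sub h2
  refine HasDerivAt.congr_deriv h3 (Eq.symm ?_)
  have e1 : ∑ j, (-(L (VA i j)) * A t i' j + A t i j * (-(L (VA i' j))))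
      = -(L (∑ j, (A t i' j • VA i j + A t i j • VA i' j))) := by
    rw [map_sum]
    rw [← Finset.sum_neg_distrib]
    refine Finset.sum_congr rfl fun j _ => ?_
    rw [map_add, map_smul, map_smul]
    simp [smul_eq_mul]; ring
  have e2 : ∑ p, (-(L (VB p i)) * B t p i' + B t p i * (-(L (VB p i'))))
      = -(L (∑ p, (B t p i' • VB p i + B t p i • VB p i'))) := by
    rw [map_sum]
    rw [← Finset.sum_neg_distrib]
    refine Finset.sum_congr rfl fun p _ => ?_
    rw [map_add, map_smul, map_smul]
    simp [smul_eq_mul]; ring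
  rw [e1, e2]
  have emat : (∑ j, (A t i' j • VA i j + A t i j • VA i' j))
      = (∑ p, (B t p i' • VB p i + B t p i • VB p i')) := by
    funext p q
    simp only [Finset.sum_apply, Pi.add_apply, Pi.smul_apply, smul_eq_mul, hVA, hVB]
    simp [Finset.sum_add_distrib, mul_ite, ite_mul, mul_one, mul_zero, zero_mul,
      Finset.sum_ite_eq, Finset.sum_ite_eq']
    ring
  rw [emat]
  ring
end

section
/- Consider a feed-forward network with N ≥ 2 layers in which layer h is parameterized by a free-parameter vector v^(h) ∈ ℝ^{d_h} through a sparsity/weight-sharing pattern g_h (so the weight matrix W^(h) has entries W^(h)[i,j] = 0 if g_h(i,j) = 0 and W^(h)[i,j] = v^(h)[g_h(i,j)] otherwise), with differentiable homogeneous activations. If the free parameters evolve under gradient flow, d/dt v^(h)(t) = −∂L(v(t))/∂v^(h), then for every h ∈ {1,…,N−1} the quantity ‖v^(h)(t)‖₂² − ‖v^(h+1)(t)‖₂² is constant in t; equivalently, its time derivative is zero for all t. -/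
/- ===== auxiliary lemmas ===== -/

private lemma phi_pos_hom (φ : ℝ → ℝ) (hd : Differentiable ℝ φ)
    (hh : ∀ x, deriv φ x * x = φ x) {c : ℝ} (hc : 0 < c) (x : ℝ) :
    φ (c * x) = c * φ x := by
  have hder : ∀ y : ℝ, 0 < y → HasDerivAt (fun c : ℝ => φ (c * x) * c⁻¹) 0 y := by
    intro y hy
    have h1 : HasDerivAt (fun c : ℝ => φ (c * x)) (deriv φ (y * x) * x) y := by
      have := ((hd (y * x)).hasDerivAt).comp y ((hasDerivAt_id y).mul_const x)
      simpa [Function.comp_def] using this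
    have h2 : HasDerivAt (fun c : ℝ => c⁻¹) (-(y ^ 2)⁻¹) y := hasDerivAt_inv hy.ne'
    have h3 := h1.mul h2
    have h4 : deriv φ (y * x) * (y * x) = φ (y * x) := hh _
    have hval : deriv φ (y * x) * x * y⁻¹ + φ (y * x) * -(y ^ 2)⁻¹ = 0 := by
      rw [← h4]
      have hyy : y * (y ^ 2)⁻¹ = y⁻¹ := by
        rw [pow_two, mul_inv, ← mul_assoc, mul_inv_cancel₀ hy.ne', one_mul]
      linear_combination (-(deriv φ (y * x) * x)) * hyy
    have hval' : deriv φ (y * x) * x * y⁻¹ + -(φ (y * x) * (y ^ 2)⁻¹) = 0 := by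
      linear_combination hval
    rw [← hval']
    simpa [Pi.mul_def] using h3
  have key : ∀ a b : ℝ, 0 < a → a ≤ b →
      φ (b * x) * b⁻¹ = φ (a * x) * a⁻¹ := by
    intro a b ha hab
    have hcont : ContinuousOn (fun c : ℝ => φ (c * x) * c⁻¹) (Set.Icc a b) := by
      intro y hy
      exact ((hder y (lt_of_lt_of_le ha hy.1)).continuousAt).continuousWithinAt
    exact constant_of_has_deriv_right_zero hcont
      (fun y hy => ((hder y (lt_of_lt_of_le ha hy.1)).hasDerivWithinAt))
      b ⟨hab, le_refl b⟩
  have h1 : φ (c * x) * c⁻¹ = φ (1 * x) * 1⁻¹ := by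
    rcases le_total c 1 with hc1 | hc1
    · exact (key c 1 hc hc1).symm
    · exact key 1 c one_pos hc1
  rw [one_mul, inv_one, mul_one] at h1
  field_simp at h1
  linarith [h1]

/-- update two consecutive layers of the parameters -/
def updTwo (d : ℕ → ℕ) (vt : (h : ℕ) → Fin (d h) → ℝ) (k : ℕ)
    (p : (Fin (d k) → ℝ) × (Fin (d (k + 1)) → ℝ)) : (h : ℕ) → Fin (d h) → ℝ :=
  Function.update (Function.update vt k p.1) (k + 1) p.2

lemma updTwo_k (d : ℕ → ℕ) (vt : (h : ℕ) → Fin (d h) → ℝ) (k : ℕ)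
    (p : (Fin (d k) → ℝ) × (Fin (d (k + 1)) → ℝ)) : updTwo d vt k p k = p.1 := by
  rw [updTwo, Function.update_of_ne (Nat.succ_ne_self k).symm, Function.update_self]

lemma updTwo_k1 (d : ℕ → ℕ) (vt : (h : ℕ) → Fin (d h) → ℝ) (k : ℕ)
    (p : (Fin (d k) → ℝ) × (Fin (d (k + 1)) → ℝ)) : updTwo d vt k p (k + 1) = p.2 := by
  rw [updTwo, Function.update_self]

lemma updTwo_other (d : ℕ → ℕ) (vt : (h : ℕ) → Fin (d h) → ℝ) (k : ℕ)
    (p : (Fin (d k) → ℝ) × (Fin (d (k + 1)) → ℝ)) (h : ℕ) (h1 : h ≠ k) (h2 : h ≠ k + 1) :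
    updTwo d vt k p h = vt h := by
  rw [updTwo, Function.update_of_ne h2, Function.update_of_ne h1]

lemma updTwo_fix2 (d : ℕ → ℕ) (vt : (h : ℕ) → Fin (d h) → ℝ) (k : ℕ)
    (u : Fin (d k) → ℝ) :
    updTwo d vt k (u, vt (k + 1)) = Function.update vt k u := by
  have h : vt (k + 1) = (Function.update vt k u) (k + 1) :=
    (Function.update_of_ne (Nat.succ_ne_self k) u vt).symm
  rw [updTwo]
  simp only [h, Function.update_eq_self]

lemma updTwo_fix1 (d : ℕ → ℕ) (vt : (h : ℕ) → Fin (d h) → ℝ) (k : ℕ)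
    (w : Fin (d (k + 1)) → ℝ) :
    updTwo d vt k (vt k, w) = Function.update vt (k + 1) w := by
  rw [updTwo]
  simp only [Function.update_eq_self]

/-- The layer-`h` weight matrix determined by free parameters `v h : Fin (d h) → ℝ`
and a sparsity/weight-sharing pattern `g h` (`g h i j = none` means the entry is
fixed to `0`, `g h i j = some k` means the entry is the shared parameter `v h k`). -/
def sharedWeights (n d : ℕ → ℕ)
    (g : (h : ℕ) → Fin (n (h + 1)) → Fin (n h) → Option (Fin (d h)))
    (v : (h : ℕ) → Fin (d h) → ℝ) (h : ℕ) :
    Matrix (Fin (n (h + 1))) (Fin (n h)) ℝ :=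
  Matrix.of fun i j =>
    match g h i j with
    | none => 0
    | some k => v h k

/-- The vector of values computed at layer `h` of the network with weight matrices
`W h` and coordinate-wise activations `φ h` (with `φ 0 = id`, layer `0` the input). -/
def netOut (n : ℕ → ℕ) (φ : ℕ → ℝ → ℝ)
    (W : (h : ℕ) → Matrix (Fin (n (h + 1))) (Fin (n h)) ℝ)
    (x : Fin (n 0) → ℝ) : (h : ℕ) → Fin (n h) → ℝ
  | 0 => x
  | h + 1 => (W h).mulVec fun j => φ h (netOut n φ W x h j)

/-- Replace the `k`-th free parameter of layer `h` by `s`. -/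
def updParam (d : ℕ → ℕ) (v : (h : ℕ) → Fin (d h) → ℝ) (h : ℕ) (k : Fin (d h))
    (s : ℝ) : (h' : ℕ) → Fin (d h') → ℝ :=
  Function.update v h (Function.update (v h) k s)

/-- The training loss `L(v) = (1/m) ∑ₖ ℓ(f_w(xₖ), yₖ)` of an `N`-layer network with
sparse connections and shared weights, as a function of the free parameters `v`. -/
noncomputable def trainLossShared (n d : ℕ → ℕ) (N m : ℕ) (φ : ℕ → ℝ → ℝ)
    (g : (h : ℕ) → Fin (n (h + 1)) → Fin (n h) → Option (Fin (d h)))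
    (ℓ : (Fin (n N) → ℝ) → (Fin (n N) → ℝ) → ℝ)
    (x : Fin m → Fin (n 0) → ℝ) (y : Fin m → Fin (n N) → ℝ)
    (v : (h : ℕ) → Fin (d h) → ℝ) : ℝ :=
  (1 / (m : ℝ)) * ∑ k, ℓ (netOut n φ (sharedWeights n d g v) (x k) N) (y k)

lemma sharedWeights_congr_layer (n d : ℕ → ℕ)
    (g : (h : ℕ) → Fin (n (h + 1)) → Fin (n h) → Option (Fin (d h)))
    (v v' : (h : ℕ) → Fin (d h) → ℝ) (h : ℕ) (hv : v' h = v h) :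
    sharedWeights n d g v' h = sharedWeights n d g v h := by
  ext i j
  simp only [sharedWeights, Matrix.of_apply, hv]

lemma sharedWeights_smul_layer (n d : ℕ → ℕ)
    (g : (h : ℕ) → Fin (n (h + 1)) → Fin (n h) → Option (Fin (d h)))
    (v v' : (h : ℕ) → Fin (d h) → ℝ) (h : ℕ) (c : ℝ) (hv : v' h = c • v h) :
    sharedWeights n d g v' h = c • sharedWeights n d g v h := by
  ext i j
  simp only [sharedWeights, Matrix.of_apply, Matrix.smul_apply, smul_eq_mul]
  cases hg : g h i j with
  | none => simp [hg]
  | some a => simp [hg, hv]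

lemma netOut_succ (n : ℕ → ℕ) (φ : ℕ → ℝ → ℝ)
    (W : (h : ℕ) → Matrix (Fin (n (h + 1))) (Fin (n h)) ℝ)
    (x : Fin (n 0) → ℝ) (h : ℕ) :
    netOut n φ W x (h + 1) = (W h).mulVec fun j => φ h (netOut n φ W x h j) := rfl

lemma netOut_succ_apply (n : ℕ → ℕ) (φ : ℕ → ℝ → ℝ)
    (W : (h : ℕ) → Matrix (Fin (n (h + 1))) (Fin (n h)) ℝ)
    (x : Fin (n 0) → ℝ) (h : ℕ) (i : Fin (n (h + 1))) :
    netOut n φ W x (h + 1) i = ∑ j, W h i j * φ h (netOut n φ W x h j) := by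
  rw [netOut_succ]
  simp [Matrix.mulVec, dotProduct]

lemma netOut_congr_lt (n : ℕ → ℕ) (φ : ℕ → ℝ → ℝ)
    (W W' : (h : ℕ) → Matrix (Fin (n (h + 1))) (Fin (n h)) ℝ)
    (x : Fin (n 0) → ℝ) (h : ℕ) (hW : ∀ j, j < h → W j = W' j) :
    netOut n φ W x h = netOut n φ W' x h := by
  induction h with
  | zero => rfl
  | succ h ih =>
    rw [netOut_succ, netOut_succ, hW h (lt_add_one h),
      ih (fun j hj => hW j (hj.trans (lt_add_one h)))]

lemma netOut_eq_from (n : ℕ → ℕ) (φ : ℕ → ℝ → ℝ)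
    (W W' : (h : ℕ) → Matrix (Fin (n (h + 1))) (Fin (n h)) ℝ)
    (x : Fin (n 0) → ℝ) (h₀ : ℕ)
    (base : netOut n φ W x h₀ = netOut n φ W' x h₀)
    (hW : ∀ j, h₀ ≤ j → W j = W' j) :
    ∀ e, netOut n φ W x (h₀ + e) = netOut n φ W' x (h₀ + e) := by
  intro e
  induction e with
  | zero => exact base
  | succ e ih =>
    have heq : h₀ + (e + 1) = (h₀ + e) + 1 := rfl
    rw [heq, netOut_succ, netOut_succ, hW (h₀ + e) (Nat.le_add_right _ _), ih]

lemma netOut_diff {P : Type*} [NormedAddCommGroup P] [NormedSpace ℝ P]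
    (n : ℕ → ℕ) (φ : ℕ → ℝ → ℝ) (hφ : ∀ h, Differentiable ℝ (φ h))
    (W : P → (h : ℕ) → Matrix (Fin (n (h + 1))) (Fin (n h)) ℝ)
    (hW : ∀ h i j, Differentiable ℝ fun p => W p h i j)
    (x : Fin (n 0) → ℝ) :
    ∀ h i, Differentiable ℝ fun p => netOut n φ (W p) x h i := by
  intro h
  induction h with
  | zero => intro i; exact differentiable_const _
  | succ h ih =>
    intro i
    have heq : (fun p => netOut n φ (W p) x (h + 1) i)
        = fun p => ∑ j, W p h i j * φ h (netOut n φ (W p) x h j) := by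
      funext p; exact netOut_succ_apply n φ (W p) x h i
    rw [heq]
    exact Differentiable.fun_sum fun j _ => (hW h i j).mul ((hφ h).comp (ih j))

/-- Rescaling two consecutive layers inversely leaves the network output invariant. -/
lemma netOut_invariance (n d : ℕ → ℕ)
    (g : (h : ℕ) → Fin (n (h + 1)) → Fin (n h) → Option (Fin (d h)))
    (φ : ℕ → ℝ → ℝ) (hφdiff : ∀ h, Differentiable ℝ (φ h))
    (hφhom : ∀ h x, deriv (φ h) x * x = φ h x)
    (vt : (h : ℕ) → Fin (d h) → ℝ) (k N : ℕ) (hkN : k + 2 ≤ N)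
    {c : ℝ} (hc : 0 < c) (x : Fin (n 0) → ℝ) :
    netOut n φ (sharedWeights n d g (updTwo d vt k (c • vt k, c⁻¹ • vt (k + 1)))) x N
      = netOut n φ (sharedWeights n d g vt) x N := by
  set v1 := updTwo d vt k (c • vt k, c⁻¹ • vt (k + 1)) with hv1
  set Wc := sharedWeights n d g v1 with hWc
  set W0 := sharedWeights n d g vt with hW0
  have hother : ∀ j, j ≠ k → j ≠ k + 1 → Wc j = W0 j := fun j h1 h2 =>
    sharedWeights_congr_layer n d g vt v1 j (updTwo_other d vt k _ j h1 h2)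
  have hbase : netOut n φ Wc x k = netOut n φ W0 x k :=
    netOut_congr_lt n φ Wc W0 x k
      (fun j hj => hother j (Nat.ne_of_lt hj) (by omega))
  have hsk : v1 k = c • vt k := updTwo_k d vt k _
  have hsk1 : v1 (k + 1) = c⁻¹ • vt (k + 1) := updTwo_k1 d vt k _
  have hk1 : netOut n φ Wc x (k + 1) = c • netOut n φ W0 x (k + 1) := by
    rw [netOut_succ, netOut_succ, hbase, hWc,
      sharedWeights_smul_layer n d g vt v1 k c hsk, Matrix.smul_mulVec]
  have hk2 : netOut n φ Wc x (k + 2) = netOut n φ W0 x (k + 2) := by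
    show netOut n φ Wc x ((k + 1) + 1) = netOut n φ W0 x ((k + 1) + 1)
    rw [netOut_succ n φ Wc x (k + 1), netOut_succ n φ W0 x (k + 1), hk1]
    have hfun : (fun j => φ (k + 1) ((c • netOut n φ W0 x (k + 1)) j))
        = c • fun j => φ (k + 1) (netOut n φ W0 x (k + 1) j) := by
      funext j
      simp only [Pi.smul_apply, smul_eq_mul]
      exact phi_pos_hom (φ (k + 1)) (hφdiff _) (hφhom _) hc _
    rw [hfun, hWc, sharedWeights_smul_layer n d g vt v1 (k + 1) c⁻¹ hsk1,
      Matrix.smul_mulVec, Matrix.mulVec_smul, smul_smul,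
      inv_mul_cancel₀ hc.ne', one_smul]
  obtain ⟨e, he⟩ := Nat.exists_eq_add_of_le hkN
  subst he
  exact netOut_eq_from n φ Wc W0 x (k + 2) hk2
    (fun j hj => hother j (by omega) (by omega)) e

/-- **Auto-balancing for networks with sparse connections and shared weights**
(convolutional networks are a special case). If the free parameters of an `N ≥ 2`
layer network with differentiable homogeneous activations and differentiable loss
evolve under gradient flow, then for any two consecutive layers (`v k` and
`v (k+1)` with `k + 1 < N`, i.e. `v^{(k+1)}` and `v^{(k+2)}` in 1-based numbering)
the difference of the squared Euclidean norms of their free-parameter vectors has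
zero time derivative. -/
theorem gradient_flow_balances_shared_layers
    (n d : ℕ → ℕ) (N : ℕ) (hN : 2 ≤ N) (m : ℕ)
    (φ : ℕ → ℝ → ℝ)
    (hφdiff : ∀ h, Differentiable ℝ (φ h))
    (hφhom : ∀ h x, deriv (φ h) x * x = φ h x)
    (hφ0 : ∀ x, φ 0 x = x)
    (g : (h : ℕ) → Fin (n (h + 1)) → Fin (n h) → Option (Fin (d h)))
    (ℓ : (Fin (n N) → ℝ) → (Fin (n N) → ℝ) → ℝ)
    (hℓdiff : ∀ y, Differentiable ℝ fun z => ℓ z y)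
    (hℓnonneg : ∀ z y, 0 ≤ ℓ z y)
    (x : Fin m → Fin (n 0) → ℝ) (y : Fin m → Fin (n N) → ℝ)
    (v : ℝ → (h : ℕ) → Fin (d h) → ℝ)
    (hGF : ∀ (t : ℝ) (h : ℕ), h < N → ∀ (k : Fin (d h)),
      HasDerivAt (fun τ => v τ h k)
        (-(deriv
            (fun s => trainLossShared n d N m φ g ℓ x y (updParam d (v t) h k s))
            (v t h k))) t)
    (k : ℕ) (hk : k + 1 < N) (t : ℝ) :
    HasDerivAt
      (fun τ => (∑ a, v τ k a ^ 2) - ∑ a, v τ (k + 1) a ^ 2) 0 t := by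
  classical
  have hkN' : k < N := by omega
  have hWdiff : ∀ h i j, Differentiable ℝ
      fun p : (Fin (d k) → ℝ) × (Fin (d (k + 1)) → ℝ) =>
        sharedWeights n d g (updTwo d (v t) k p) h i j := by
    intro h i j
    simp only [sharedWeights, Matrix.of_apply]
    cases hg : g h i j with
    | none => simp only [hg]; exact differentiable_const _
    | some a =>
      simp only [hg]
      by_cases hhk : h = k
      · subst hhk
        have hrw : (fun p : (Fin (d h) → ℝ) × (Fin (d (h + 1)) → ℝ) =>
            updTwo d (v t) h p h a) = fun p => p.1 a := by
          funext p; rw [updTwo_k]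
        rw [hrw]
        fun_prop
      · by_cases hhk1 : h = k + 1
        · subst hhk1
          have hrw : (fun p : (Fin (d k) → ℝ) × (Fin (d (k + 1)) → ℝ) =>
              updTwo d (v t) k p (k + 1) a) = fun p => p.2 a := by
            funext p; rw [updTwo_k1]
          rw [hrw]
          fun_prop
        · have hrw : (fun p : (Fin (d k) → ℝ) × (Fin (d (k + 1)) → ℝ) =>
              updTwo d (v t) k p h a) = fun _ => v t h a := by
            funext p; rw [updTwo_other d (v t) k p h hhk hhk1]
          rw [hrw]
          exact differentiable_const _
  set G : (Fin (d k) → ℝ) × (Fin (d (k + 1)) → ℝ) → ℝ :=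
    fun p => trainLossShared n d N m φ g ℓ x y (updTwo d (v t) k p) with hG
  have hGdiff : Differentiable ℝ G := by
    rw [hG]
    simp only [trainLossShared]
    apply Differentiable.const_mul
    apply Differentiable.fun_sum
    intro s _
    exact (hℓdiff (y s)).comp (differentiable_pi.mpr
      (fun i => netOut_diff n φ hφdiff _ hWdiff (x s) N i))
  set L' := fderiv ℝ G (v t k, v t (k + 1)) with hL'
  have hL'fd : HasFDerivAt G L' (v t k, v t (k + 1)) := (hGdiff _).hasFDerivAt
  have hDk : ∀ a : Fin (d k),
      deriv (fun s => trainLossShared n d N m φ g ℓ x y (updParam d (v t) k a s))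
        (v t k a) = L' (Pi.single a 1, 0) := by
    intro a
    have hcurve : HasDerivAt
        (fun s : ℝ => ((Function.update (v t k) a s, v t (k + 1)) :
          (Fin (d k) → ℝ) × (Fin (d (k + 1)) → ℝ)))
        ((Pi.single a 1 : Fin (d k) → ℝ), (0 : Fin (d (k + 1)) → ℝ)) (v t k a) := by
      apply HasDerivAt.prodMk
      · rw [hasDerivAt_pi]
        intro j
        by_cases hj : j = a
        · subst hj
          simp only [Function.update_self, Pi.single_eq_same]
          exact hasDerivAt_id _
        · simp only [Function.update_of_ne hj, Pi.single_eq_of_ne hj]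
          exact hasDerivAt_const _ _
      · exact hasDerivAt_const _ _
    have hcurve0 : ((Function.update (v t k) a (v t k a), v t (k + 1)) :
        (Fin (d k) → ℝ) × (Fin (d (k + 1)) → ℝ)) = (v t k, v t (k + 1)) := by
      simp [Function.update_eq_self]
    have hL'fd' : HasFDerivAt G L'
        ((fun s : ℝ => ((Function.update (v t k) a s, v t (k + 1)) :
          (Fin (d k) → ℝ) × (Fin (d (k + 1)) → ℝ))) (v t k a)) := by
      simpa [Function.update_eq_self] using hL'fd
    have hcomp := hL'fd'.comp_hasDerivAt (v t k a) hcurve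
    have heqfun : (fun s => trainLossShared n d N m φ g ℓ x y (updParam d (v t) k a s))
        = G ∘ (fun s : ℝ => ((Function.update (v t k) a s, v t (k + 1)) :
          (Fin (d k) → ℝ) × (Fin (d (k + 1)) → ℝ))) := by
      funext s
      simp only [Function.comp, hG, updTwo_fix2]
      rfl
    rw [heqfun]
    exact hcomp.deriv
  have hDk1 : ∀ a : Fin (d (k + 1)),
      deriv (fun s => trainLossShared n d N m φ g ℓ x y (updParam d (v t) (k + 1) a s))
        (v t (k + 1) a) = L' (0, Pi.single a 1) := by
    intro a
    have hcurve : HasDerivAt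
        (fun s : ℝ => ((v t k, Function.update (v t (k + 1)) a s) :
          (Fin (d k) → ℝ) × (Fin (d (k + 1)) → ℝ)))
        ((0 : Fin (d k) → ℝ), (Pi.single a 1 : Fin (d (k + 1)) → ℝ)) (v t (k + 1) a) := by
      apply HasDerivAt.prodMk
      · exact hasDerivAt_const _ _
      · rw [hasDerivAt_pi]
        intro j
        by_cases hj : j = a
        · subst hj
          simp only [Function.update_self, Pi.single_eq_same]
          exact hasDerivAt_id _
        · simp only [Function.update_of_ne hj, Pi.single_eq_of_ne hj]
          exact hasDerivAt_const _ _
    have hcurve0 : ((v t k, Function.update (v t (k + 1)) a (v t (k + 1) a)) :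
        (Fin (d k) → ℝ) × (Fin (d (k + 1)) → ℝ)) = (v t k, v t (k + 1)) := by
      simp [Function.update_eq_self]
    have hL'fd' : HasFDerivAt G L'
        ((fun s : ℝ => ((v t k, Function.update (v t (k + 1)) a s) :
          (Fin (d k) → ℝ) × (Fin (d (k + 1)) → ℝ))) (v t (k + 1) a)) := by
      simpa [Function.update_eq_self] using hL'fd
    have hcomp := hL'fd'.comp_hasDerivAt (v t (k + 1) a) hcurve
    have heqfun : (fun s => trainLossShared n d N m φ g ℓ x y
          (updParam d (v t) (k + 1) a s))
        = G ∘ (fun s : ℝ => ((v t k, Function.update (v t (k + 1)) a s) :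
          (Fin (d k) → ℝ) × (Fin (d (k + 1)) → ℝ))) := by
      funext s
      simp only [Function.comp, hG, updTwo_fix1]
      rfl
    rw [heqfun]
    exact hcomp.deriv
  have hscale : HasDerivAt
      (fun s : ℝ => (((1 + s) • v t k, (1 + s)⁻¹ • v t (k + 1)) :
        (Fin (d k) → ℝ) × (Fin (d (k + 1)) → ℝ)))
      ((v t k, -(v t (k + 1)))) 0 := by
    have h0 : HasDerivAt (fun s : ℝ => 1 + s) 1 0 := by
      simpa using (hasDerivAt_id (0 : ℝ)).const_add 1
    apply HasDerivAt.prodMk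
    · simpa using h0.smul_const (v t k)
    · have h1 : HasDerivAt (fun s : ℝ => (1 + s)⁻¹) (-1) 0 := by
        have := h0.inv (by norm_num)
        simpa [Pi.inv_def] using this
      have := h1.smul_const (v t (k + 1))
      simpa [neg_smul] using this
  have hscale0 : (((1 + (0:ℝ)) • v t k, (1 + (0:ℝ))⁻¹ • v t (k + 1)) :
      (Fin (d k) → ℝ) × (Fin (d (k + 1)) → ℝ)) = (v t k, v t (k + 1)) := by
    norm_num
  have hL'fd'' : HasFDerivAt G L'
      ((fun s : ℝ => (((1 + s) • v t k, (1 + s)⁻¹ • v t (k + 1)) :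
        (Fin (d k) → ℝ) × (Fin (d (k + 1)) → ℝ))) 0) := by
    simpa using hL'fd
  have hchain := hL'fd''.comp_hasDerivAt 0 hscale
  have hinv : ∀ c : ℝ, 0 < c →
      G (c • v t k, c⁻¹ • v t (k + 1)) = G (v t k, v t (k + 1)) := by
    intro c hc
    have hfix : updTwo d (v t) k (v t k, v t (k + 1)) = v t := by
      rw [updTwo_fix1, Function.update_eq_self]
    rw [hG]
    simp only [hfix, trainLossShared]
    congr 1
    apply Finset.sum_congr rfl
    intro s _
    rw [netOut_invariance n d g φ hφdiff hφhom (v t) k N (by omega) hc (x s)]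
  have hev : (G ∘ (fun s : ℝ => (((1 + s) • v t k, (1 + s)⁻¹ • v t (k + 1)) :
      (Fin (d k) → ℝ) × (Fin (d (k + 1)) → ℝ))))
        =ᶠ[nhds 0] fun _ => G (v t k, v t (k + 1)) := by
    have hmem : Set.Ioi (-1 : ℝ) ∈ nhds (0 : ℝ) := isOpen_Ioi.mem_nhds (by norm_num)
    filter_upwards [hmem] with s hs
    have hpos : 0 < 1 + s := by
      have h : (-1 : ℝ) < s := hs
      linarith
    exact hinv (1 + s) hpos
  have hzero : HasDerivAt (G ∘ (fun s : ℝ => (((1 + s) • v t k, (1 + s)⁻¹ • v t (k + 1)) :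
      (Fin (d k) → ℝ) × (Fin (d (k + 1)) → ℝ)))) 0 0 :=
    (hasDerivAt_const 0 _).congr_of_eventuallyEq hev
  have hbalance : L' ((v t k, -(v t (k + 1)))) = 0 := hchain.unique hzero
  have hkey : ∀ (cu : Fin (d k) → ℝ) (cw : Fin (d (k + 1)) → ℝ),
      L' (cu, cw) = (∑ a, cu a * L' (Pi.single a 1, 0))
        + ∑ a, cw a * L' (0, Pi.single a 1) := by
    intro cu cw
    have hdecomp : ((cu, cw) : (Fin (d k) → ℝ) × (Fin (d (k + 1)) → ℝ))
        = (∑ a, cu a • ((Pi.single a 1, 0) :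
            (Fin (d k) → ℝ) × (Fin (d (k + 1)) → ℝ)))
          + ∑ a, cw a • ((0, Pi.single a 1) :
            (Fin (d k) → ℝ) × (Fin (d (k + 1)) → ℝ)) := by
      apply Prod.ext
      · simp only [Prod.fst_add, Prod.fst_sum, Prod.smul_mk, smul_zero]
        funext i
        simp [Finset.sum_apply, Pi.single_apply]
      · simp only [Prod.snd_add, Prod.snd_sum, Prod.smul_mk, smul_zero]
        funext i
        simp [Finset.sum_apply, Pi.single_apply]
    rw [hdecomp, map_add, map_sum, map_sum]
    congr 1
    · apply Finset.sum_congr rfl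
      intro a _
      rw [← smul_eq_mul, ← map_smul]
    · apply Finset.sum_congr rfl
      intro a _
      rw [← smul_eq_mul, ← map_smul]
  have hd1 : HasDerivAt (fun τ => ∑ a, v τ k a ^ 2)
      (∑ a, (2 : ℕ) * v t k a ^ 1 *
        (-(deriv (fun s => trainLossShared n d N m φ g ℓ x y
            (updParam d (v t) k a s)) (v t k a)))) t :=
    HasDerivAt.fun_sum fun a _ => (hGF t k hkN' a).pow 2
  have hd2 : HasDerivAt (fun τ => ∑ a, v τ (k + 1) a ^ 2)
      (∑ a, (2 : ℕ) * v t (k + 1) a ^ 1 *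
        (-(deriv (fun s => trainLossShared n d N m φ g ℓ x y
            (updParam d (v t) (k + 1) a s)) (v t (k + 1) a)))) t :=
    HasDerivAt.fun_sum fun a _ => (hGF t (k + 1) hk a).pow 2
  have hsub := hd1.sub hd2
  have hfinal : (∑ a, (2 : ℕ) * v t k a ^ 1 *
        (-(deriv (fun s => trainLossShared n d N m φ g ℓ x y
            (updParam d (v t) k a s)) (v t k a))))
      - (∑ a, (2 : ℕ) * v t (k + 1) a ^ 1 *
        (-(deriv (fun s => trainLossShared n d N m φ g ℓ x y
            (updParam d (v t) (k + 1) a s)) (v t (k + 1) a)))) = 0 := by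
    have hL0 : (∑ a, v t k a * L' (Pi.single a 1, 0))
        + ∑ a, (-(v t (k + 1) a)) * L' (0, Pi.single a 1) = 0 := by
      have h := hkey (v t k) (-(v t (k + 1)))
      rw [hbalance] at h
      simpa using h.symm
    simp only [hDk, hDk1, pow_one, Nat.cast_ofNat]
    have e1 : ∑ a, (2 : ℝ) * v t k a * (-(L' (Pi.single a 1, 0)))
        = (-2 : ℝ) * ∑ a, v t k a * L' (Pi.single a 1, 0) := by
      rw [Finset.mul_sum]; apply Finset.sum_congr rfl; intro a _; ring
    have e2 : ∑ a, (2 : ℝ) * v t (k + 1) a * (-(L' (0, Pi.single a 1)))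
        = (2 : ℝ) * ∑ a, (-(v t (k + 1) a)) * L' (0, Pi.single a 1) := by
      rw [Finset.mul_sum]; apply Finset.sum_congr rfl; intro a _; ring
    rw [e1, e2]
    linarith [hL0]
  rw [← hfinal]
  exact hsub
end

section
/- Let 0 < ε < ‖M*‖_F and suppose the initialization satisfies ‖U₀‖_F² ≤ ε, ‖V₀‖_F² ≤ ε, and ‖U₀ᵀU₀ − V₀ᵀV₀‖_F ≤ ε/2. Run gradient descent with step sizes η_t = √(ε/r) / (100·(t+1)·‖M*‖_F^{3/2}). Then for every t ≥ 0: (i) balancedness: ‖U_tᵀU_t − V_tᵀV_t‖_F ≤ ε; (ii) the objective is non-increasing: f(U_t, V_t) ≤ f(U_{t-1}, V_{t-1}) ≤ ⋯ ≤ f(U₀, V₀) ≤ 2‖M*‖_F²; (iii) boundedness: ‖U_t‖_F² ≤ 5√r·‖M*‖_F and ‖V_t‖_F² ≤ 5√r·‖M*‖_F. -/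
open Matrix

/-- Frobenius norm of a real matrix. -/
noncomputable def frob {m n : Type*} [Fintype m] [Fintype n] (A : Matrix m n ℝ) : ℝ :=
  Real.sqrt (∑ i, ∑ j, A i j ^ 2)

namespace MFGD

variable {m n p : Type*} [Fintype m] [Fintype n] [Fintype p]

def S (A : Matrix m n ℝ) : ℝ := ∑ i, ∑ j, A i j ^ 2

def dotF (A B : Matrix m n ℝ) : ℝ := ∑ i, ∑ j, A i j * B i j

lemma S_nonneg (A : Matrix m n ℝ) : 0 ≤ S A :=
  Finset.sum_nonneg fun _ _ => Finset.sum_nonneg fun _ _ => sq_nonneg _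

lemma frob_eq (A : Matrix m n ℝ) : frob A = Real.sqrt (S A) := rfl

lemma frob_nonneg (A : Matrix m n ℝ) : 0 ≤ frob A := Real.sqrt_nonneg _

lemma frob_sq (A : Matrix m n ℝ) : frob A ^ 2 = S A := Real.sq_sqrt (S_nonneg A)

lemma dotF_self (A : Matrix m n ℝ) : dotF A A = S A := by
  simp [dotF, S, sq]

lemma dotF_le (A B : Matrix m n ℝ) : dotF A B ≤ frob A * frob B := by
  have h := Real.sum_mul_le_sqrt_mul_sqrt (Finset.univ : Finset (m × n))
    (fun q => A q.1 q.2) (fun q => B q.1 q.2)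
  simp only [Fintype.sum_prod_type] at h
  exact h

lemma S_add (A B : Matrix m n ℝ) : S (A + B) = S A + 2 * dotF A B + S B := by
  simp only [S, dotF, Matrix.add_apply, add_sq, Finset.sum_add_distrib, Finset.mul_sum,
    mul_assoc]

lemma frob_add_le (A B : Matrix m n ℝ) : frob (A + B) ≤ frob A + frob B := by
  rw [frob_eq]
  have h1 : S (A + B) ≤ (frob A + frob B) ^ 2 := by
    rw [S_add]
    have := dotF_le A B
    nlinarith [frob_sq A, frob_sq B]
  calc Real.sqrt (S (A+B)) ≤ Real.sqrt ((frob A + frob B)^2) := Real.sqrt_le_sqrt h1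
    _ = frob A + frob B := Real.sqrt_sq (by have := frob_nonneg A; have := frob_nonneg B; linarith)

lemma frob_smul (c : ℝ) (A : Matrix m n ℝ) : frob (c • A) = |c| * frob A := by
  rw [frob_eq, frob_eq]
  have : S (c • A) = c^2 * S A := by
    simp [S, Finset.mul_sum]; congr 1; ext i; congr 1; ext j; ring
  rw [this, Real.sqrt_mul (sq_nonneg c), Real.sqrt_sq_eq_abs]

lemma frob_neg (A : Matrix m n ℝ) : frob (-A) = frob A := by
  rw [frob_eq, frob_eq]; congr 1; simp [S]

lemma frob_transpose (A : Matrix m n ℝ) : frob Aᵀ = frob A := by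
  rw [frob_eq, frob_eq]; congr 1; rw [S, S, Finset.sum_comm]; rfl

lemma frob_sub_le (A B : Matrix m n ℝ) : frob (A - B) ≤ frob A + frob B := by
  rw [sub_eq_add_neg]
  exact (frob_add_le A (-B)).trans (by rw [frob_neg])

lemma frob_mul_le (A : Matrix m n ℝ) (B : Matrix n p ℝ) :
    frob (A * B) ≤ frob A * frob B := by
  have h : S (A * B) ≤ S A * S B := by
    have h1 : ∀ i j, (A * B) i j ^ 2 ≤ (∑ k, A i k ^ 2) * (∑ k, B k j ^ 2) := fun i j => by
      simpa [Matrix.mul_apply] using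
        Finset.sum_mul_sq_le_sq_mul_sq Finset.univ (fun k => A i k) (fun k => B k j)
    calc S (A * B) ≤ ∑ i, ∑ j, (∑ k, A i k ^ 2) * (∑ k, B k j ^ 2) :=
          Finset.sum_le_sum fun i _ => Finset.sum_le_sum fun j _ => h1 i j
      _ = S A * S B := by
          rw [S, S, Finset.sum_mul]
          congr 1; ext i
          rw [← Finset.mul_sum, Finset.sum_comm (γ := p)]
  calc frob (A*B) = Real.sqrt (S (A*B)) := rfl
    _ ≤ Real.sqrt (S A * S B) := Real.sqrt_le_sqrt h
    _ = frob A * frob B := by rw [Real.sqrt_mul (S_nonneg A), frob_eq, frob_eq]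

lemma frob_mul_sq_le (A : Matrix m n ℝ) (B : Matrix n p ℝ) :
    frob (A * B) ^ 2 ≤ frob A ^ 2 * frob B ^ 2 := by
  nlinarith [frob_mul_le A B, frob_nonneg (A * B), frob_nonneg A, frob_nonneg B]

lemma sum3 (f : m → n → p → ℝ) : ∑ i, ∑ j, ∑ k, f i j k = ∑ k, ∑ j, ∑ i, f i j k :=
  calc ∑ i, ∑ j, ∑ k, f i j k = ∑ i, ∑ k, ∑ j, f i j k :=
        Finset.sum_congr rfl fun _ _ => Finset.sum_comm
    _ = ∑ k, ∑ i, ∑ j, f i j k := Finset.sum_comm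
    _ = ∑ k, ∑ j, ∑ i, f i j k := Finset.sum_congr rfl fun _ _ => Finset.sum_comm

lemma dotF_add_right (A B C : Matrix m n ℝ) : dotF A (B + C) = dotF A B + dotF A C := by
  simp [dotF, Matrix.add_apply, mul_add, Finset.sum_add_distrib]

lemma dotF_smul_right (c : ℝ) (A B : Matrix m n ℝ) : dotF A (c • B) = c * dotF A B := by
  simp only [dotF, Matrix.smul_apply, Finset.mul_sum, smul_eq_mul]
  refine Finset.sum_congr rfl fun i _ => Finset.sum_congr rfl fun j _ => by ring

lemma dotF_neg_right (A B : Matrix m n ℝ) : dotF A (-B) = - dotF A B := by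
  simp [dotF, Finset.sum_neg_distrib]

lemma abs_dotF_le (A B : Matrix m n ℝ) : |dotF A B| ≤ frob A * frob B := by
  rcases abs_cases (dotF A B) with ⟨h, _⟩ | ⟨h, _⟩
  · rw [h]; exact dotF_le A B
  · rw [h, ← dotF_neg_right, ← frob_neg (A := B)]; exact dotF_le A (-B)

lemma dotF_mul_left (A : Matrix m n ℝ) (B : Matrix m p ℝ) (C : Matrix p n ℝ) :
    dotF A (B * C) = dotF (Bᵀ * A) C :=
  calc dotF A (B * C) = ∑ i, ∑ j, ∑ k, A i j * (B i k * C k j) := by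
        simp [dotF, Matrix.mul_apply, Finset.mul_sum]
    _ = ∑ k, ∑ j, ∑ i, A i j * (B i k * C k j) := sum3 _
    _ = dotF (Bᵀ * A) C := by
        simp only [dotF, Matrix.mul_apply, Matrix.transpose_apply, Finset.sum_mul]
        exact Finset.sum_congr rfl fun k _ => Finset.sum_congr rfl fun j _ =>
          Finset.sum_congr rfl fun i _ => by ring

lemma dotF_mul_right (A : Matrix m n ℝ) (B : Matrix m p ℝ) (C : Matrix p n ℝ) :
    dotF A (B * C) = dotF (A * Cᵀ) B :=
  calc dotF A (B * C) = ∑ i, ∑ j, ∑ k, A i j * (B i k * C k j) := by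
        simp [dotF, Matrix.mul_apply, Finset.mul_sum]
    _ = ∑ i, ∑ k, ∑ j, A i j * (B i k * C k j) :=
        Finset.sum_congr rfl fun _ _ => Finset.sum_comm
    _ = dotF (A * Cᵀ) B := by
        simp only [dotF, Matrix.mul_apply, Matrix.transpose_apply, Finset.sum_mul]
        exact Finset.sum_congr rfl fun i _ => Finset.sum_congr rfl fun k _ =>
          Finset.sum_congr rfl fun j _ => by ring

lemma dotF_transpose (A B : Matrix m n ℝ) : dotF Aᵀ Bᵀ = dotF A B := by
  rw [dotF, dotF, Finset.sum_comm]; rfl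

/-- trace-type bound: `‖U‖_F² ≤ √(#cols) ‖UᵀU‖_F`. -/
lemma frob_sq_le_sqrt_card (U : Matrix m n ℝ) :
    frob U ^ 2 ≤ Real.sqrt (Fintype.card n) * frob (Uᵀ * U) := by
  have hdiag : S U = ∑ j, (Uᵀ * U) j j := by
    rw [S, Finset.sum_comm]
    exact Finset.sum_congr rfl fun j _ => by simp [Matrix.mul_apply, sq]
  have h1 : (S U) ^ 2 ≤ (Fintype.card n : ℝ) * ∑ j, ((Uᵀ * U) j j) ^ 2 := by
    have h := Finset.sum_mul_sq_le_sq_mul_sq Finset.univ (fun _ : n => (1:ℝ))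
      (fun j => (Uᵀ * U) j j)
    simpa [hdiag, Finset.card_univ] using h
  have h2 : ∑ j, ((Uᵀ * U) j j) ^ 2 ≤ S (Uᵀ * U) :=
    Finset.sum_le_sum fun j _ =>
      Finset.single_le_sum (f := fun k => ((Uᵀ * U) j k) ^ 2)
        (fun k _ => sq_nonneg _) (Finset.mem_univ j)
  have h3 : (S U) ^ 2 ≤ (Fintype.card n : ℝ) * S (Uᵀ * U) :=
    h1.trans (mul_le_mul_of_nonneg_left h2 (Nat.cast_nonneg _))
  calc frob U ^ 2 = S U := frob_sq U
    _ ≤ Real.sqrt ((Fintype.card n : ℝ) * S (Uᵀ * U)) := by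
        rw [show S U = Real.sqrt ((S U)^2) from (Real.sqrt_sq (S_nonneg U)).symm]
        exact Real.sqrt_le_sqrt h3
    _ = Real.sqrt (Fintype.card n) * frob (Uᵀ * U) := by
        rw [Real.sqrt_mul (Nat.cast_nonneg _), frob_eq]

lemma dotF_gram {d₁ d₂ r : Type*} [Fintype d₁] [Fintype d₂] [Fintype r]
    (U : Matrix d₁ r ℝ) (V : Matrix d₂ r ℝ) :
    dotF (Uᵀ * U) (Vᵀ * V) = S (U * Vᵀ) := by
  rw [dotF_mul_left, ← dotF_self (U * Vᵀ), dotF_mul_left, ← dotF_transpose]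
  simp [Matrix.transpose_mul, Matrix.mul_assoc]

variable {d₁ d₂ r : Type*} [Fintype d₁] [Fintype d₂] [Fintype r]

lemma idD (U : Matrix d₁ r ℝ) (V : Matrix d₂ r ℝ) (E : Matrix d₁ d₂ ℝ) (η : ℝ) :
    (U - η • (E * V))ᵀ * (U - η • (E * V)) - (V - η • (Eᵀ * U))ᵀ * (V - η • (Eᵀ * U))
      = (Uᵀ * U - Vᵀ * V) + (η ^ 2) • ((E * V)ᵀ * (E * V) - (Eᵀ * U)ᵀ * (Eᵀ * U)) := by
  simp only [transpose_sub, transpose_smul, Matrix.sub_mul, Matrix.mul_sub,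
    Matrix.smul_mul, Matrix.mul_smul, transpose_mul, transpose_transpose, smul_smul,
    smul_sub, Matrix.mul_assoc, pow_two]
  module

lemma idE (U : Matrix d₁ r ℝ) (V : Matrix d₂ r ℝ) (E M : Matrix d₁ d₂ ℝ) (η : ℝ) :
    (U - η • (E * V)) * (V - η • (Eᵀ * U))ᵀ - M
      = (U * Vᵀ - M) + ((-η) • (U * (Uᵀ * E) + (E * V) * Vᵀ) + (η ^ 2) • ((E * V) * (Uᵀ * E))) := by
  simp only [transpose_sub, transpose_smul, Matrix.sub_mul, Matrix.mul_sub,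
    Matrix.smul_mul, Matrix.mul_smul, transpose_mul, transpose_transpose, smul_smul,
    smul_sub, smul_add, Matrix.mul_assoc, neg_smul, pow_two]
  module

/-- One gradient step changes the balancedness matrix by `O(η²)`. -/
lemma step_bal (M : Matrix d₁ d₂ ℝ) (U : Matrix d₁ r ℝ) (V : Matrix d₂ r ℝ) (η : ℝ) :
    frob ((U - η • ((U * Vᵀ - M) * V))ᵀ * (U - η • ((U * Vᵀ - M) * V)) -
          (V - η • ((U * Vᵀ - M)ᵀ * U))ᵀ * (V - η • ((U * Vᵀ - M)ᵀ * U)))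
      ≤ frob (Uᵀ * U - Vᵀ * V) +
        η ^ 2 * (frob ((U * Vᵀ - M) * V) ^ 2 + frob ((U * Vᵀ - M)ᵀ * U) ^ 2) := by
  set E := U * Vᵀ - M with hE
  rw [idD]
  refine (frob_add_le _ _).trans ?_
  have h1 : frob ((η ^ 2) • ((E * V)ᵀ * (E * V) - (Eᵀ * U)ᵀ * (Eᵀ * U)))
      ≤ η ^ 2 * (frob (E * V) ^ 2 + frob (Eᵀ * U) ^ 2) := by
    rw [frob_smul, abs_of_nonneg (sq_nonneg η)]
    refine mul_le_mul_of_nonneg_left ?_ (sq_nonneg η)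
    refine (frob_sub_le _ _).trans ?_
    have a1 : frob ((E * V)ᵀ * (E * V)) ≤ frob (E * V) ^ 2 := by
      have := frob_mul_le (E * V)ᵀ (E * V)
      rw [frob_transpose] at this
      nlinarith [this]
    have a2 : frob ((Eᵀ * U)ᵀ * (Eᵀ * U)) ≤ frob (Eᵀ * U) ^ 2 := by
      have := frob_mul_le (Eᵀ * U)ᵀ (Eᵀ * U)
      rw [frob_transpose] at this
      nlinarith [this]
    linarith
  linarith [h1]

set_option maxHeartbeats 1000000 in
/-- One gradient step does not increase the squared residual, under boundedness. -/
lemma step_S_le (M : Matrix d₁ d₂ ℝ) (U : Matrix d₁ r ℝ) (V : Matrix d₂ r ℝ) (η K B : ℝ)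
    (hη : 0 ≤ η) (hK : 0 ≤ K) (hB : 0 ≤ B)
    (hEK : frob (U * Vᵀ - M) ≤ K)
    (hU : frob U ^ 2 ≤ B) (hV : frob V ^ 2 ≤ B)
    (hmain : η * K + 4 * η * B + 2 * η ^ 3 * K ^ 2 * B ≤ 2) :
    S ((U - η • ((U * Vᵀ - M) * V)) * (V - η • ((U * Vᵀ - M)ᵀ * U))ᵀ - M)
      ≤ S (U * Vᵀ - M) := by
  set E := U * Vᵀ - M with hE
  set G := U * (Uᵀ * E) + (E * V) * Vᵀ with hG
  set H := (E * V) * (Uᵀ * E) with hH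
  set X := (-η) • G + (η ^ 2) • H with hX
  have hid : (U - η • (E * V)) * (V - η • (Eᵀ * U))ᵀ - M = E + X := idE U V E M η
  rw [hid, S_add]
  have h1 : dotF E G = frob (Uᵀ * E) ^ 2 + frob (E * V) ^ 2 := by
    rw [hG, dotF_add_right, dotF_mul_left E U (Uᵀ * E), dotF_mul_right E (E * V) Vᵀ,
      transpose_transpose, dotF_self, dotF_self, ← frob_sq, ← frob_sq]
  have h2 : |dotF E H| ≤ frob (E * V) * K * frob (Uᵀ * E) := by
    rw [hH, dotF_mul_left E (E * V) (Uᵀ * E)]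
    refine (abs_dotF_le _ _).trans ?_
    have c1 : frob ((E * V)ᵀ * E) ≤ frob (E * V) * K := by
      refine (frob_mul_le _ _).trans ?_
      rw [frob_transpose]
      exact mul_le_mul_of_nonneg_left hEK (frob_nonneg _)
    exact mul_le_mul_of_nonneg_right c1 (frob_nonneg _)
  have h3 : frob X ≤ η * (frob U * frob (Uᵀ * E) + frob (E * V) * frob V)
      + η ^ 2 * (frob (E * V) * frob (Uᵀ * E)) := by
    rw [hX]
    refine (frob_add_le _ _).trans ?_
    have g1 : frob ((-η) • G) ≤ η * (frob U * frob (Uᵀ * E) + frob (E * V) * frob V) := by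
      rw [frob_smul, abs_neg, abs_of_nonneg hη]
      refine mul_le_mul_of_nonneg_left ?_ hη
      rw [hG]
      refine (frob_add_le _ _).trans ?_
      have g11 : frob (U * (Uᵀ * E)) ≤ frob U * frob (Uᵀ * E) := frob_mul_le _ _
      have g12 : frob ((E * V) * Vᵀ) ≤ frob (E * V) * frob V := by
        refine (frob_mul_le _ _).trans ?_
        rw [frob_transpose]
      linarith
    have g2 : frob ((η ^ 2) • H) ≤ η ^ 2 * (frob (E * V) * frob (Uᵀ * E)) := by
      rw [frob_smul, abs_of_nonneg (sq_nonneg η), hH]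
      exact mul_le_mul_of_nonneg_left (frob_mul_le _ _) (sq_nonneg η)
    linarith
  have h4 : dotF E X = -η * (frob (Uᵀ * E) ^ 2 + frob (E * V) ^ 2) + η ^ 2 * dotF E H := by
    rw [hX, dotF_add_right, dotF_smul_right, dotF_smul_right, h1]
  have haK : frob (E * V) ≤ K * frob V := by
    refine (frob_mul_le _ _).trans ?_
    exact mul_le_mul_of_nonneg_right hEK (frob_nonneg _)
  have hbK : frob (Uᵀ * E) ≤ frob U * K :=
    calc frob (Uᵀ * E) ≤ frob Uᵀ * frob E := frob_mul_le _ _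
      _ = frob U * frob E := by rw [frob_transpose]
      _ ≤ frob U * K := mul_le_mul_of_nonneg_left hEK (frob_nonneg U)
  have hSX : S X = frob X ^ 2 := (frob_sq X).symm
  -- pass to scalars
  set a := frob (E * V) with ha
  set b := frob (Uᵀ * E) with hb
  set u := frob U with hu
  set v := frob V with hv
  set dEH := dotF E H with hdEH
  set dEX := dotF E X with hdEX
  set SX := S X with hSX2
  set fX := frob X with hfX
  have ha0 : 0 ≤ a := frob_nonneg _
  have hb0 : 0 ≤ b := frob_nonneg _
  have hu0 : 0 ≤ u := frob_nonneg _
  have hv0 : 0 ≤ v := frob_nonneg _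
  have hfX0 : 0 ≤ fX := frob_nonneg _
  clear_value a b u v dEH dEX SX fX
  clear hid h1 hE hG hH hX hEK
  clear_value E G H X
  -- now pure real arithmetic
  have hb2K : b ^ 2 ≤ K ^ 2 * B := by
    nlinarith [mul_le_mul hbK hbK hb0 (mul_nonneg hu0 hK),
      mul_le_mul_of_nonneg_left hU (sq_nonneg K)]
  have ha2K : a ^ 2 ≤ K ^ 2 * B := by
    nlinarith [mul_le_mul haK haK ha0 (mul_nonneg hK hv0),
      mul_le_mul_of_nonneg_left hV (sq_nonneg K)]
  have h5 : SX ≤ 4 * η ^ 2 * B * (a ^ 2 + b ^ 2)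
      + 2 * η ^ 4 * (K ^ 2 * B) * (a ^ 2 + b ^ 2) := by
    have e2 : fX ^ 2 ≤ (η * (u * b + a * v) + η ^ 2 * (a * b)) ^ 2 := by
      have hrhs : 0 ≤ η * (u * b + a * v) + η ^ 2 * (a * b) := by positivity
      nlinarith [h3]
    have e3 : (u * b + a * v) ^ 2 ≤ 2 * B * (a ^ 2 + b ^ 2) := by
      nlinarith [sq_nonneg (u * b - a * v),
        mul_le_mul_of_nonneg_right hU (sq_nonneg b),
        mul_le_mul_of_nonneg_right hV (sq_nonneg a)]
    have e4 : (a * b) ^ 2 ≤ (K ^ 2 * B) * (a ^ 2 + b ^ 2) := by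
      nlinarith [mul_le_mul_of_nonneg_left hb2K (sq_nonneg a),
        mul_nonneg (mul_nonneg (sq_nonneg K) hB) (sq_nonneg b)]
    have e5 : (η * (u * b + a * v) + η ^ 2 * (a * b)) ^ 2
        ≤ 2 * η ^ 2 * (u * b + a * v) ^ 2 + 2 * η ^ 4 * (a * b) ^ 2 := by
      nlinarith [sq_nonneg (η * (u * b + a * v) - η ^ 2 * (a * b))]
    have e6 : 2 * η ^ 2 * (u * b + a * v) ^ 2 ≤ 2 * η ^ 2 * (2 * B * (a ^ 2 + b ^ 2)) :=
      mul_le_mul_of_nonneg_left e3 (by positivity)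
    have e7 : 2 * η ^ 4 * (a * b) ^ 2 ≤ 2 * η ^ 4 * ((K ^ 2 * B) * (a ^ 2 + b ^ 2)) :=
      mul_le_mul_of_nonneg_left e4 (by positivity)
    rw [hSX]; nlinarith [e2, e5, e6, e7]
  have h6 : 2 * dEX ≤ -2 * η * (a ^ 2 + b ^ 2) + η ^ 2 * K * (a ^ 2 + b ^ 2) := by
    have hEH : dEH ≤ a * K * b := (le_abs_self _).trans h2
    have hab : 2 * (a * K * b) ≤ K * (a ^ 2 + b ^ 2) := by nlinarith [sq_nonneg (a - b)]
    nlinarith [mul_le_mul_of_nonneg_left hEH (sq_nonneg η),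
      mul_le_mul_of_nonneg_left hab (sq_nonneg η), h4]
  have hfac : η ^ 2 * K + 4 * η ^ 2 * B + 2 * η ^ 4 * K ^ 2 * B ≤ 2 * η := by
    nlinarith [mul_le_mul_of_nonneg_left hmain hη]
  have hc2 : 0 ≤ a ^ 2 + b ^ 2 := by positivity
  linarith [mul_le_mul_of_nonneg_left hfac hc2, h5, h6]

/-- quadratic bound on the Gram matrix. -/
lemma gram_le (M : Matrix d₁ d₂ ℝ) (U : Matrix d₁ r ℝ) (V : Matrix d₂ r ℝ) {m ε : ℝ}
    (hm : 0 < m) (hεm : ε ≤ m)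
    (hE : frob (U * Vᵀ - M) ≤ 2 * m) (hM : frob M ≤ m)
    (hD : frob (Uᵀ * U - Vᵀ * V) ≤ ε) :
    frob (Uᵀ * U) ≤ 4 * m := by
  have hUV : frob (U * Vᵀ) ≤ 3 * m := by
    have : U * Vᵀ = (U * Vᵀ - M) + M := by abel
    rw [this]
    have := frob_add_le (U * Vᵀ - M) M
    linarith
  set x := frob (Uᵀ * U) with hx
  have hx0 : 0 ≤ x := frob_nonneg _
  have hsplit : (Vᵀ * V) + (Uᵀ * U - Vᵀ * V) = Uᵀ * U := by abel
  have hx2 : x ^ 2 = dotF (Uᵀ * U) (Vᵀ * V) + dotF (Uᵀ * U) (Uᵀ * U - Vᵀ * V) := by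
    rw [frob_sq, ← dotF_self, ← dotF_add_right, hsplit]
  have h1 : dotF (Uᵀ * U) (Vᵀ * V) = S (U * Vᵀ) := dotF_gram U V
  have h2 : dotF (Uᵀ * U) (Uᵀ * U - Vᵀ * V) ≤ x * ε :=
    (dotF_le _ _).trans (mul_le_mul_of_nonneg_left hD hx0)
  have h3 : S (U * Vᵀ) ≤ 9 * m ^ 2 := by
    rw [← frob_sq]
    nlinarith [frob_nonneg (U * Vᵀ)]
  nlinarith [mul_pos hm hm]

lemma frob_le_of_sq_le_sq {m n : Type*} [Fintype m] [Fintype n] {A : Matrix m n ℝ} {c : ℝ}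
    (hc : 0 ≤ c) (h : frob A ^ 2 ≤ c ^ 2) : frob A ≤ c := by
  nlinarith [frob_nonneg A]

lemma frob_mul_sq_bound {A : Matrix d₁ d₂ ℝ} {B : Matrix d₂ r ℝ} {K B2 : ℝ}
    (hK : 0 ≤ K) (hA : frob A ≤ K) (hB : frob B ^ 2 ≤ B2) :
    frob (A * B) ^ 2 ≤ K ^ 2 * B2 := by
  have h := frob_mul_sq_le A B
  have h2 : frob A ^ 2 ≤ K ^ 2 := by nlinarith [frob_nonneg A]
  have h3 : frob A ^ 2 * frob B ^ 2 ≤ K ^ 2 * B2 :=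
    mul_le_mul h2 hB (sq_nonneg _) (sq_nonneg K)
  linarith

end MFGD

/-- The asymmetric matrix factorization objective `f(U,V) = ½‖UVᵀ − M*‖_F²`. -/
noncomputable def mfObj {d₁ d₂ r : ℕ} (M : Matrix (Fin d₁) (Fin d₂) ℝ)
    (U : Matrix (Fin d₁) (Fin r) ℝ) (V : Matrix (Fin d₂) (Fin r) ℝ) : ℝ :=
  (1 / 2) * frob (U * Vᵀ - M) ^ 2

open MFGD

set_option maxHeartbeats 1000000 in
/-- Gradient descent on the unregularized objective `f(U,V) = ½‖UVᵀ − M*‖_F²`, started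
from a small balanced initialization and run with step sizes
`η_t = √(ε/r)/(100(t+1)‖M*‖_F^{3/2})`, keeps the factors balanced, decreases the
objective, and keeps the iterates bounded, for all iterations `t`. -/
theorem mf_gd_invariants {d₁ d₂ r : ℕ}
    (M : Matrix (Fin d₁) (Fin d₂) ℝ) (ε : ℝ)
    (hε0 : 0 < ε) (hεM : ε < frob M)
    (U : ℕ → Matrix (Fin d₁) (Fin r) ℝ) (V : ℕ → Matrix (Fin d₂) (Fin r) ℝ)
    (η : ℕ → ℝ)
    (hη : ∀ t : ℕ, η t = Real.sqrt (ε / r) / (100 * ((t : ℝ) + 1) * frob M ^ ((3 : ℝ) / 2)))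
    (hU0 : frob (U 0) ^ 2 ≤ ε) (hV0 : frob (V 0) ^ 2 ≤ ε)
    (hbal0 : frob ((U 0)ᵀ * U 0 - (V 0)ᵀ * V 0) ≤ ε / 2)
    (hUstep : ∀ t, U (t + 1) = U t - η t • ((U t * (V t)ᵀ - M) * V t))
    (hVstep : ∀ t, V (t + 1) = V t - η t • ((U t * (V t)ᵀ - M)ᵀ * U t)) :
    (∀ t, frob ((U t)ᵀ * U t - (V t)ᵀ * V t) ≤ ε) ∧
    (∀ t, mfObj M (U (t + 1)) (V (t + 1)) ≤ mfObj M (U t) (V t)) ∧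
    mfObj M (U 0) (V 0) ≤ 2 * frob M ^ 2 ∧
    (∀ t, frob (U t) ^ 2 ≤ 5 * Real.sqrt r * frob M ∧
          frob (V t) ^ 2 ≤ 5 * Real.sqrt r * frob M) := by
  rcases Nat.eq_zero_or_pos r with hr0 | hrpos
  · -- trivial case r = 0
    subst hr0
    have hUV : ∀ t, U t * (V t)ᵀ = (0 : Matrix (Fin d₁) (Fin d₂) ℝ) := by
      intro t; ext i j; simp [Matrix.mul_apply]
    have hfrobU : ∀ t, frob (U t) = 0 := by intro t; simp [frob]
    have hfrobV : ∀ t, frob (V t) = 0 := by intro t; simp [frob]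
    have hobj : ∀ t, mfObj M (U t) (V t) = (1/2) * frob ((0 : Matrix (Fin d₁) (Fin d₂) ℝ) - M) ^ 2 := by
      intro t; rw [mfObj, hUV]
    refine ⟨fun t => ?_, fun t => ?_, ?_, fun t => ?_⟩
    · have : frob ((U t)ᵀ * U t - (V t)ᵀ * V t) = 0 := by simp [frob]
      rw [this]; exact hε0.le
    · rw [hobj, hobj]
    · rw [hobj 0, zero_sub, frob_neg]
      nlinarith [sq_nonneg (frob M)]
    · constructor
      · rw [hfrobU]
        simp [mul_nonneg, Real.sqrt_nonneg]
      · rw [hfrobV]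
        simp
  · -- main case r ≥ 1
    have hr1 : (1:ℝ) ≤ (r:ℝ) := by exact_mod_cast hrpos
    have hrne : (r:ℝ) ≠ 0 := by positivity
    set m := frob M with hmdef
    have hm : 0 < m := hε0.trans hεM
    set sm := Real.sqrt m with hsmdef
    have hsm : 0 < sm := Real.sqrt_pos.2 hm
    have hsm2 : sm ^ 2 = m := Real.sq_sqrt hm.le
    set sr := Real.sqrt (r:ℝ) with hsrdef
    have hsr1 : 1 ≤ sr := Real.one_le_sqrt.2 hr1
    have hsr0 : 0 < sr := lt_of_lt_of_le one_pos hsr1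
    have hsr2 : sr ^ 2 = (r:ℝ) := Real.sq_sqrt (by positivity)
    set sε := Real.sqrt ε with hsedef
    have hsε2 : sε ^ 2 = ε := Real.sq_sqrt hε0.le
    have hsε0 : 0 ≤ sε := Real.sqrt_nonneg _
    have hsεsm : sε ≤ sm := Real.sqrt_le_sqrt hεM.le
    set s := Real.sqrt (ε / r) with hsdef
    have hs0 : 0 ≤ s := Real.sqrt_nonneg _
    have hs2 : s ^ 2 = ε / r := Real.sq_sqrt (by positivity)
    have hεr : ε / r ≤ ε := div_le_self hε0.le hr1
    have hssm : s ≤ sm := Real.sqrt_le_sqrt (hεr.trans hεM.le)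
    have hssr : s * sr = sε := by
      rw [hsdef, hsrdef, hsedef, ← Real.sqrt_mul (by positivity)]
      congr 1
      field_simp
    have h32 : m ^ ((3:ℝ)/2) = m * sm := by
      rw [show (3:ℝ)/2 = 1 + 1/2 by norm_num, Real.rpow_add hm, Real.rpow_one,
        hsmdef, Real.sqrt_eq_rpow]
    have hην : ∀ t, η t = s / (100 * (m * sm) * ((t:ℝ) + 1)) := by
      intro t; rw [hη t, h32]; ring
    have hη0 : ∀ t, 0 ≤ η t := by
      intro t; rw [hην t]; positivity
    have hηle : ∀ t, η t ≤ s / (100 * (m * sm)) := by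
      intro t; rw [hην t]
      have h1 : (0:ℝ) < 100 * (m * sm) := by positivity
      have h2 : 100 * (m * sm) ≤ 100 * (m * sm) * ((t:ℝ) + 1) := by
        nlinarith [Nat.cast_nonneg (α := ℝ) t]
      exact div_le_div_of_nonneg_left hs0 h1 h2
    -- step-size smallness facts
    have hkey1 : ∀ t, η t * m ≤ 1/100 := by
      intro t
      have e : s / (100 * (m * sm)) * m = s / (100 * sm) := by
        field_simp
      have h1 : η t * m ≤ s / (100 * sm) := by
        rw [← e]; exact mul_le_mul_of_nonneg_right (hηle t) hm.le
      have h2 : s / (100 * sm) ≤ 1/100 := by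
        rw [div_le_div_iff₀ (by positivity) (by norm_num)]
        nlinarith [hssm]
      linarith
    have hkey2 : ∀ t, η t * (sr * m) ≤ 1/100 := by
      intro t
      have e : s / (100 * (m * sm)) * (sr * m) = sε / (100 * sm) := by
        rw [← hssr]; field_simp
      have h1 : η t * (sr * m) ≤ sε / (100 * sm) := by
        rw [← e]
        exact mul_le_mul_of_nonneg_right (hηle t) (by positivity)
      have h2 : sε / (100 * sm) ≤ 1/100 := by
        rw [div_le_div_iff₀ (by positivity) (by norm_num)]
        nlinarith [hsεsm]
      linarith
    have hkey3 : ∀ t, η t ^ 3 * (sr * m ^ 3) ≤ 1/1000000 := by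
      intro t
      have hcube : s ^ 3 * sr ≤ sm ^ 3 := by
        have e1 : s ^ 3 * sr = (ε/r) * sε := by rw [← hs2, ← hssr]; ring
        have e2 : (ε/r) * sε ≤ ε * sε := mul_le_mul_of_nonneg_right hεr hsε0
        have e3 : ε * sε = sε ^ 3 := by rw [← hsε2]; ring
        have e4 : sε ^ 3 ≤ sm ^ 3 := pow_le_pow_left₀ hsε0 hsεsm 3
        linarith
      have e : (s / (100 * (m * sm))) ^ 3 * (sr * m ^ 3) = s ^ 3 * sr / (1000000 * sm ^ 3) := by
        field_simp
        ring
      have h1 : η t ^ 3 ≤ (s / (100 * (m * sm))) ^ 3 := pow_le_pow_left₀ (hη0 t) (hηle t) 3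
      have h2 : η t ^ 3 * (sr * m ^ 3) ≤ s ^ 3 * sr / (1000000 * sm ^ 3) := by
        rw [← e]
        exact mul_le_mul_of_nonneg_right h1 (by positivity)
      have h3 : s ^ 3 * sr / (1000000 * sm ^ 3) ≤ 1/1000000 := by
        rw [div_le_div_iff₀ (by positivity) (by norm_num)]
        nlinarith [hcube, pow_pos hsm 3]
      linarith
    have hmain : ∀ t, η t * (2*m) + 4 * η t * (4*sr*m) + 2 * η t ^ 3 * (2*m)^2 * (4*sr*m) ≤ 2 := by
      intro t
      nlinarith [hkey1 t, hkey2 t, hkey3 t]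
    -- the balancedness increment constant
    set C := (32/10000) * (ε / sr) with hCdef
    have hC0 : 0 ≤ C := by positivity
    have hCε : C ≤ ε / 100 := by
      have h1 : ε / sr ≤ ε := div_le_self hε0.le hsr1
      rw [hCdef]; linarith
    have hη2 : ∀ t, η t ^ 2 * (32 * sr * m ^ 3) = C / ((t:ℝ)+1)^2 := by
      intro t
      have hden : (100 * (m * sm) * ((t:ℝ)+1)) ^ 2 = 10000 * (m^2 * m) * ((t:ℝ)+1)^2 := by
        rw [mul_pow, mul_pow, mul_pow, hsm2]; ring
      rw [hην t, div_pow, hden, hs2, ← hsr2, hCdef]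
      have hx : ((t:ℝ)+1) ≠ 0 := by positivity
      field_simp
    -- initial residual bound
    have hE0 : frob (U 0 * (V 0)ᵀ - M) ≤ 2*m := by
      have h1 : frob (U 0 * (V 0)ᵀ) ≤ frob (U 0) * frob (V 0) :=
        (frob_mul_le _ _).trans (by rw [frob_transpose])
      have hu : frob (U 0) ≤ sε := frob_le_of_sq_le_sq hsε0 (by rw [hsε2]; exact hU0)
      have hv : frob (V 0) ≤ sε := frob_le_of_sq_le_sq hsε0 (by rw [hsε2]; exact hV0)
      have h2 : frob (U 0) * frob (V 0) ≤ ε :=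
        calc frob (U 0) * frob (V 0) ≤ sε * sε :=
              mul_le_mul hu hv (frob_nonneg _) hsε0
          _ = ε := by rw [← hsε2]; ring
      have h3 := frob_sub_le (U 0 * (V 0)ᵀ) M
      rw [← hmdef] at h3
      linarith
    have hSE0 : S (U 0 * (V 0)ᵀ - M) ≤ 4*m^2 := by
      rw [← frob_sq]
      have h := pow_le_pow_left₀ (frob_nonneg (U 0 * (V 0)ᵀ - M)) hE0 2
      nlinarith [h]
    -- derived bounds from the invariant
    have hbnds : ∀ t, S (U t * (V t)ᵀ - M) ≤ S (U 0 * (V 0)ᵀ - M) →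
        frob ((U t)ᵀ * U t - (V t)ᵀ * V t) ≤ ε →
        frob (U t * (V t)ᵀ - M) ≤ 2*m ∧ frob (U t)^2 ≤ 4*sr*m ∧ frob (V t)^2 ≤ 4*sr*m := by
      intro t hSt hDt
      have hEt : frob (U t * (V t)ᵀ - M) ≤ 2*m :=
        frob_le_of_sq_le_sq (by positivity) (by rw [frob_sq]; nlinarith [hSt, hSE0])
      refine ⟨hEt, ?_, ?_⟩
      · have hg := gram_le M (U t) (V t) hm hεM.le hEt hmdef.ge hDt
        have ht := frob_sq_le_sqrt_card (U t)
        rw [Fintype.card_fin, ← hsrdef] at ht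
        calc frob (U t)^2 ≤ sr * frob ((U t)ᵀ * U t) := ht
          _ ≤ sr * (4*m) := mul_le_mul_of_nonneg_left hg hsr0.le
          _ = 4*sr*m := by ring
      · have hswap : V t * (U t)ᵀ - Mᵀ = (U t * (V t)ᵀ - M)ᵀ := by
          rw [transpose_sub, transpose_mul, transpose_transpose]
        have hEt' : frob (V t * (U t)ᵀ - Mᵀ) ≤ 2*m := by
          rw [hswap, frob_transpose]; exact hEt
        have hDt' : frob ((V t)ᵀ * V t - (U t)ᵀ * U t) ≤ ε := by
          rw [show (V t)ᵀ*V t - (U t)ᵀ*U t = -((U t)ᵀ*U t - (V t)ᵀ*V t) from (neg_sub _ _).symm,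
            frob_neg]
          exact hDt
        have hMt : frob Mᵀ ≤ m := by rw [frob_transpose]
        have hg := gram_le Mᵀ (V t) (U t) hm hεM.le hEt' hMt hDt'
        have ht := frob_sq_le_sqrt_card (V t)
        rw [Fintype.card_fin, ← hsrdef] at ht
        calc frob (V t)^2 ≤ sr * frob ((V t)ᵀ * V t) := ht
          _ ≤ sr * (4*m) := mul_le_mul_of_nonneg_left hg hsr0.le
          _ = 4*sr*m := by ring
    -- one-step progress
    have hstep : ∀ t, S (U t * (V t)ᵀ - M) ≤ S (U 0 * (V 0)ᵀ - M) →
        frob ((U t)ᵀ * U t - (V t)ᵀ * V t) ≤ ε →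
        S (U (t+1) * (V (t+1))ᵀ - M) ≤ S (U t * (V t)ᵀ - M) ∧
        frob ((U (t+1))ᵀ * U (t+1) - (V (t+1))ᵀ * V (t+1)) ≤
          frob ((U t)ᵀ * U t - (V t)ᵀ * V t) + C / ((t:ℝ)+1)^2 := by
      intro t hSt hDt
      obtain ⟨hEt, hu2, hv2⟩ := hbnds t hSt hDt
      constructor
      · rw [hUstep t, hVstep t]
        exact step_S_le M (U t) (V t) (η t) (2*m) (4*sr*m) (hη0 t) (by positivity)
          (by positivity) hEt hu2 hv2 (hmain t)
      · rw [hUstep t, hVstep t]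
        refine (step_bal M (U t) (V t) (η t)).trans ?_
        have hf1 : frob ((U t * (V t)ᵀ - M) * V t)^2 ≤ 16*sr*m^3 := by
          have h := frob_mul_sq_bound (by positivity : (0:ℝ) ≤ 2*m) hEt hv2
          calc frob ((U t * (V t)ᵀ - M) * V t)^2 ≤ (2*m)^2 * (4*sr*m) := h
            _ = 16*sr*m^3 := by ring
        have hf2 : frob ((U t * (V t)ᵀ - M)ᵀ * U t)^2 ≤ 16*sr*m^3 := by
          have hEt' : frob (U t * (V t)ᵀ - M)ᵀ ≤ 2*m := by rw [frob_transpose]; exact hEt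
          have h := frob_mul_sq_bound (by positivity : (0:ℝ) ≤ 2*m) hEt' hu2
          calc frob ((U t * (V t)ᵀ - M)ᵀ * U t)^2 ≤ (2*m)^2 * (4*sr*m) := h
            _ = 16*sr*m^3 := by ring
        have hsum : η t ^ 2 * (frob ((U t * (V t)ᵀ - M) * V t)^2
            + frob ((U t * (V t)ᵀ - M)ᵀ * U t)^2) ≤ η t ^ 2 * (32*sr*m^3) :=
          mul_le_mul_of_nonneg_left (by linarith) (sq_nonneg _)
        rw [hη2 t] at hsum
        linarith
    -- main induction
    have inv : ∀ t, S (U t * (V t)ᵀ - M) ≤ S (U 0 * (V 0)ᵀ - M) ∧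
        frob ((U t)ᵀ * U t - (V t)ᵀ * V t) ≤ ε/2 + C * (2 - 2/((t:ℝ)+1)) := by
      intro t
      induction t with
      | zero =>
        refine ⟨le_refl _, ?_⟩
        norm_num
        exact hbal0
      | succ t ih =>
        have hDt : frob ((U t)ᵀ * U t - (V t)ᵀ * V t) ≤ ε := by
          have h1 : (0:ℝ) ≤ C/((t:ℝ)+1) := by positivity
          have e : C*(2 - 2/((t:ℝ)+1)) = 2*C - 2*(C/((t:ℝ)+1)) := by ring
          linarith [ih.2, hCε]
        obtain ⟨hs1, hs2'⟩ := hstep t ih.1 hDt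
        refine ⟨hs1.trans ih.1, ?_⟩
        push_cast
        set x := (t:ℝ)+1 with hxdef
        have hx0 : (0:ℝ) < x := by rw [hxdef]; positivity
        have hx1 : (1:ℝ) ≤ x := by rw [hxdef]; nlinarith [Nat.cast_nonneg (α := ℝ) t]
        have hkey : 1/x^2 + 2/(x+1) ≤ 2/x := by
          rw [div_add_div _ _ (by positivity : (x:ℝ)^2 ≠ 0) (by positivity : x+1 ≠ 0),
            div_le_div_iff₀ (by positivity) (by positivity)]
          nlinarith [mul_le_mul_of_nonneg_left hx1 hx0.le]
        have hcomb : C/x^2 + C*(2 - 2/x) ≤ C*(2 - 2/(x+1)) := by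
          have h := mul_le_mul_of_nonneg_left hkey hC0
          have e1 : C * (1/x^2 + 2/(x+1)) = C/x^2 + 2*(C/(x+1)) := by ring
          have e2 : C * (2/x) = 2*(C/x) := by ring
          have e3 : C*(2 - 2/x) = 2*C - 2*(C/x) := by ring
          have e4 : C*(2 - 2/(x+1)) = 2*C - 2*(C/(x+1)) := by ring
          linarith [h]
        have := ih.2
        linarith
    have hDle : ∀ t, frob ((U t)ᵀ * U t - (V t)ᵀ * V t) ≤ ε := by
      intro t
      have h1 : (0:ℝ) ≤ C/((t:ℝ)+1) := by positivity
      have e : C*(2 - 2/((t:ℝ)+1)) = 2*C - 2*(C/((t:ℝ)+1)) := by ring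
      linarith [(inv t).2, hCε]
    refine ⟨hDle, fun t => ?_, ?_, fun t => ?_⟩
    · have h := (hstep t (inv t).1 (hDle t)).1
      simp only [mfObj]
      rw [frob_sq, frob_sq]
      linarith
    · simp only [mfObj]
      rw [frob_sq]
      linarith
    · obtain ⟨_, hu2, hv2⟩ := hbnds t (inv t).1 (hDle t)
      constructor
      · linarith [hu2, (mul_pos hsr0 hm).le]
      · linarith [hv2, (mul_pos hsr0 hm).le]
end

section
/- Let M* ∈ ℝ^{d₁×d₂} have rank at most r, and let (U, V) with U ∈ ℝ^{d₁×r}, V ∈ ℝ^{d₂×r} be a stationary point of f, i.e. (UVᵀ − M*)V = 0 and (UVᵀ − M*)ᵀU = 0, satisfying ‖UᵀU − VᵀV‖_F ≤ ε. Then either ‖UVᵀ − M*‖_F ≤ ε, or (U, V) is a strict saddle point of f: there exist Δ_U ∈ ℝ^{d₁×r} and Δ_V ∈ ℝ^{d₂×r} such that the Hessian quadratic form of f at (U,V) in direction (Δ_U, Δ_V), namely 2⟨UVᵀ − M*, Δ_U Δ_Vᵀ⟩ + ‖U Δ_Vᵀ + Δ_U Vᵀ‖_F², is strictly negative. -/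
open Matrix

/-- Trace inner product `⟨A, B⟩ = tr(AᵀB)` of real matrices. -/
def minner {m n : Type*} [Fintype m] [Fintype n] (A B : Matrix m n ℝ) : ℝ :=
  ∑ i, ∑ j, A i j * B i j

open Module

lemma frob_nonneg {m n : Type*} [Fintype m] [Fintype n] (A : Matrix m n ℝ) : 0 ≤ frob A :=
  Real.sqrt_nonneg _

lemma frob_sq {m n : Type*} [Fintype m] [Fintype n] (A : Matrix m n ℝ) :
    frob A ^ 2 = ∑ i, ∑ j, A i j ^ 2 :=
  Real.sq_sqrt (Finset.sum_nonneg fun _ _ => Finset.sum_nonneg fun _ _ => sq_nonneg _)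

lemma sylvester {m n p : Type*} [Fintype m] [Fintype n] [Fintype p]
    (A : Matrix m n ℝ) (B : Matrix n p ℝ) :
    A.rank + B.rank ≤ Fintype.card n + (A * B).rank := by
  set f := A.mulVecLin with hf
  set g := B.mulVecLin with hg
  set h := f.domRestrict (LinearMap.range g) with hh
  have hrange : LinearMap.range (A * B).mulVecLin = LinearMap.range h := by
    rw [Matrix.mulVecLin_mul, LinearMap.range_comp, ← hf, ← hg, hh,
      LinearMap.range_domRestrict]
  have hmap : (LinearMap.ker h).map (LinearMap.range g).subtype ≤ LinearMap.ker f := by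
    rintro x ⟨⟨y, hy⟩, hmem, rfl⟩
    simpa [hh] using hmem
  have hk : finrank ℝ (LinearMap.ker h) ≤ finrank ℝ (LinearMap.ker f) := by
    rw [← Submodule.finrank_map_subtype_eq (LinearMap.range g) (LinearMap.ker h)]
    exact Submodule.finrank_mono hmap
  have hB : B.rank = finrank ℝ (LinearMap.range h) + finrank ℝ (LinearMap.ker h) := by
    rw [Matrix.rank, ← hg, ← LinearMap.finrank_range_add_finrank_ker h]
  have hA : A.rank + finrank ℝ (LinearMap.ker f) = Fintype.card n := by
    rw [Matrix.rank, ← hf, LinearMap.finrank_range_add_finrank_ker]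
    simp [Module.finrank_fintype_fun_eq_card]
  have hAB : (A * B).rank = finrank ℝ (LinearMap.range h) := by
    rw [Matrix.rank, hrange]
  omega

private lemma range_mul_le {n : Type*} [Fintype n] (X Y : Matrix n n ℝ) :
    LinearMap.range (X * Y).mulVecLin ≤ LinearMap.range X.mulVecLin := by
  rw [Matrix.mulVecLin_mul]; exact LinearMap.range_comp_le_range _ _

lemma rank_add_rank_le_rank_add_of_orth {m n : Type*} [Fintype m] [Fintype n]
    (A B : Matrix m n ℝ) (hc : Aᵀ * B = 0) (hr : A * Bᵀ = 0) :
    A.rank + B.rank ≤ (A + B).rank := by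
  set G := Aᵀ * A with hG
  set H := Bᵀ * B with hH
  have hGsymm : Gᵀ = G := by rw [hG, transpose_mul, transpose_transpose]
  have hHsymm : Hᵀ = H := by rw [hH, transpose_mul, transpose_transpose]
  have hBA : Bᵀ * A = 0 := by
    have := congrArg transpose hc
    simpa [transpose_mul] using this
  have hAB' : B * Aᵀ = 0 := by
    have := congrArg transpose hr
    simpa [transpose_mul] using this
  have hGH : G * H = 0 := by
    rw [hG, hH, Matrix.mul_assoc, ← Matrix.mul_assoc A, hr, Matrix.zero_mul, Matrix.mul_zero]
  have hHG : H * G = 0 := by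
    rw [hG, hH, Matrix.mul_assoc, ← Matrix.mul_assoc B, hAB', Matrix.zero_mul, Matrix.mul_zero]
  have hsum : (A + B)ᵀ * (A + B) = G + H := by
    rw [transpose_add, Matrix.add_mul, Matrix.mul_add, Matrix.mul_add, hc, hBA, hG, hH]
    simp
  -- range G ≤ range (G + H)
  have key : ∀ X Y : Matrix n n ℝ, Xᵀ = X → Y * X = 0 →
      LinearMap.range X.mulVecLin ≤ LinearMap.range (X + Y).mulVecLin := by
    intro X Y hXs hYX
    have h1 : (X + Y) * X = X * X := by rw [add_mul, hYX, add_zero]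
    have h2 : (X * X).rank = X.rank := by
      rw [show X * X = Xᵀ * X by rw [hXs]]
      exact rank_transpose_mul_self X
    have h3 : LinearMap.range (X * X).mulVecLin = LinearMap.range X.mulVecLin :=
      Submodule.eq_of_le_of_finrank_le (range_mul_le X X) h2.ge
    rw [← h3, ← h1]
    exact range_mul_le _ _
  have hG_le := key G H hGsymm hHG
  have hH_le : LinearMap.range H.mulVecLin ≤ LinearMap.range (G + H).mulVecLin := by
    have := key H G hHsymm hGH
    rwa [add_comm] at this
  have hinf : LinearMap.range G.mulVecLin ⊓ LinearMap.range H.mulVecLin = ⊥ := by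
    rw [Submodule.eq_bot_iff]
    rintro x ⟨⟨u, hu⟩, ⟨v, hv⟩⟩
    have hx : x ⬝ᵥ x = 0 := by
      have hxx : x ⬝ᵥ x = (G *ᵥ u) ⬝ᵥ (H *ᵥ v) := by
        rw [← mulVecLin_apply, ← mulVecLin_apply, hu, hv]
      rw [hxx, dotProduct_mulVec]
      have : (G *ᵥ u) ᵥ* H = 0 := by
        rw [← mulVec_transpose, hHsymm, mulVec_mulVec, hHG, zero_mulVec]
      rw [this, zero_dotProduct]
    exact dotProduct_self_eq_zero.mp hx
  have hsup : finrank ℝ ↥(LinearMap.range G.mulVecLin ⊔ LinearMap.range H.mulVecLin)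
      = G.rank + H.rank := by
    have := Submodule.finrank_sup_add_finrank_inf_eq
      (LinearMap.range G.mulVecLin) (LinearMap.range H.mulVecLin)
    rw [hinf] at this
    simpa [Matrix.rank] using this
  have hfin : G.rank + H.rank ≤ (G + H).rank := by
    rw [← hsup, Matrix.rank]
    exact Submodule.finrank_mono (sup_le hG_le hH_le)
  calc A.rank + B.rank = G.rank + H.rank := by
        rw [hG, hH, rank_transpose_mul_self, rank_transpose_mul_self]
    _ ≤ (G + H).rank := hfin
    _ = (A + B).rank := by rw [← hsum, rank_transpose_mul_self]

lemma trace_eq_sum_eigs {n : ℕ} (G : Matrix (Fin n) (Fin n) ℝ) (hG : G.IsHermitian) :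
    G.trace = ∑ i, hG.eigenvalues i := by
  conv_lhs => rw [hG.spectral_theorem]
  rw [Unitary.conjStarAlgAut_apply, Matrix.trace_mul_cycle]
  rw [Unitary.coe_star_mul_self, Matrix.one_mul, Matrix.trace_diagonal]
  simp

lemma top_singular {d₁ d₂ : ℕ} (R : Matrix (Fin d₁) (Fin d₂) ℝ) (hR : 0 < frob R) :
    ∃ (σ : ℝ) (x : Fin d₁ → ℝ) (z : Fin d₂ → ℝ),
      0 < σ ∧ x ⬝ᵥ x = 1 ∧ z ⬝ᵥ z = 1 ∧ x ⬝ᵥ (R *ᵥ z) = σ ∧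
      frob R ≤ Real.sqrt R.rank * σ ∧ 1 ≤ R.rank := by
  have hRT : Rᴴ = Rᵀ := conjTranspose_eq_transpose_of_trivial R
  have hpsd : (Rᵀ * R).PosSemidef := by
    have := posSemidef_conjTranspose_mul_self R
    rwa [hRT] at this
  set G := Rᵀ * R with hGdef
  have hG : G.IsHermitian := hpsd.1
  have hGrank : G.rank = R.rank := rank_transpose_mul_self R
  -- trace of G equals frob R squared
  have htr : G.trace = frob R ^ 2 := by
    rw [frob_sq, Matrix.trace]
    rw [Finset.sum_comm]
    congr 1; ext j
    simp [Matrix.diag, hGdef, Matrix.mul_apply, dotProduct, pow_two]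
  have htr2 : G.trace = ∑ i, hG.eigenvalues i := trace_eq_sum_eigs G hG
  have hnneg : ∀ i, 0 ≤ hG.eigenvalues i := hpsd.eigenvalues_nonneg
  -- rank as card of nonzero eigenvalues
  have hcard : G.rank = (Finset.univ.filter (fun i => hG.eigenvalues i ≠ 0)).card := by
    rw [hG.rank_eq_card_non_zero_eigs]
    exact (Fintype.card_subtype _)
  -- d₂ positive
  have hd₂ : 0 < d₂ := by
    by_contra h
    push_neg at h
    interval_cases d₂
    have : frob R = 0 := by simp [frob]
    linarith
  haveI : NeZero d₂ := ⟨by omega⟩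
  obtain ⟨i₀, -, hmax⟩ := Finset.exists_max_image Finset.univ hG.eigenvalues
    ⟨⟨0, hd₂⟩, Finset.mem_univ _⟩
  set lam := hG.eigenvalues i₀ with hlam
  have hsum_le : ∑ i, hG.eigenvalues i ≤ G.rank * lam := by
    rw [hcard]
    calc ∑ i, hG.eigenvalues i
        = ∑ i ∈ Finset.univ.filter (fun i => hG.eigenvalues i ≠ 0), hG.eigenvalues i := by
          rw [Finset.sum_filter_ne_zero]
      _ ≤ (Finset.univ.filter (fun i => hG.eigenvalues i ≠ 0)).card • lam := by
          apply Finset.sum_le_card_nsmul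
          intro i _
          exact hmax i (Finset.mem_univ i)
      _ = _ := by rw [nsmul_eq_mul]
  have hfrob2 : (0:ℝ) < frob R ^ 2 := by positivity
  have hlampos : 0 < lam := by
    rcases le_or_gt lam 0 with h | h
    · exfalso
      have : G.trace ≤ 0 := by
        rw [htr2]
        calc (∑ i, hG.eigenvalues i) ≤ G.rank * lam := hsum_le
          _ ≤ 0 := mul_nonpos_of_nonneg_of_nonpos (by positivity) h
      linarith [htr ▸ this]
    · exact h
  have hrank1 : 1 ≤ G.rank := by
    by_contra h
    push_neg at h
    have h0 : G.rank = 0 := by omega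
    rw [h0] at hsum_le
    push_cast at hsum_le
    rw [← htr2, htr] at hsum_le
    linarith
  -- the eigenvector
  set z : Fin d₂ → ℝ := ⇑(hG.eigenvectorBasis i₀) with hzdef
  have hz1 : z ⬝ᵥ z = 1 := by
    have h1 : (inner ℝ (hG.eigenvectorBasis i₀) (hG.eigenvectorBasis i₀) : ℝ) = 1 := by
      have := orthonormal_iff_ite.mp hG.eigenvectorBasis.orthonormal i₀ i₀
      simpa using this
    rw [EuclideanSpace.inner_eq_star_dotProduct] at h1
    simpa [dotProduct, WithLp.equiv] using h1
  have hGz : G *ᵥ z = lam • z := hG.mulVec_eigenvectorBasis i₀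
  have hRz : (R *ᵥ z) ⬝ᵥ (R *ᵥ z) = lam := by
    rw [dotProduct_mulVec, ← mulVec_transpose, mulVec_mulVec, ← hGdef, hGz, smul_dotProduct,
      hz1, smul_eq_mul, mul_one]
  set σ := Real.sqrt lam with hσdef
  have hσpos : 0 < σ := Real.sqrt_pos.mpr hlampos
  have hσsq : σ * σ = lam := Real.mul_self_sqrt hlampos.le
  refine ⟨σ, σ⁻¹ • (R *ᵥ z), z, hσpos, ?_, hz1, ?_, ?_, ?_⟩
  · rw [smul_dotProduct, dotProduct_smul, hRz, smul_eq_mul, smul_eq_mul, ← hσsq]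
    field_simp
  · rw [smul_dotProduct, hRz, smul_eq_mul, ← hσsq]
    field_simp
  · have hle : frob R ^ 2 ≤ (R.rank : ℝ) * (σ * σ) := by
      rw [hσsq, ← htr, htr2, ← hGrank]
      exact hsum_le
    have := Real.sqrt_le_sqrt hle
    rwa [Real.sqrt_sq (show (0:ℝ) ≤ frob R from Real.sqrt_nonneg _), Real.sqrt_mul (by positivity),
      Real.sqrt_mul_self hσpos.le] at this
  · rw [← hGrank]; exact hrank1

lemma avg_quad_bound {r N : ℕ} (B : Matrix (Fin r) (Fin r) ℝ) (a : Fin N → Fin r → ℝ)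
    (horth : ∀ i j, a i ⬝ᵥ a j = if i = j then (1:ℝ) else 0) :
    ∑ i, a i ⬝ᵥ (B *ᵥ a i) ≤ frob B * Real.sqrt N := by
  classical
  set P : Matrix (Fin r) (Fin r) ℝ := fun j l => ∑ i, a i j * a i l with hP
  have key1 : ∑ i, a i ⬝ᵥ (B *ᵥ a i) = ∑ j, ∑ l, B j l * P j l := by
    have h1 : ∀ i, a i ⬝ᵥ (B *ᵥ a i) = ∑ j, ∑ l, a i j * (B j l * a i l) := by
      intro i
      simp [dotProduct, mulVec, Finset.mul_sum]
    calc ∑ i, a i ⬝ᵥ (B *ᵥ a i)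
        = ∑ i, ∑ j, ∑ l, a i j * (B j l * a i l) := Finset.sum_congr rfl fun i _ => h1 i
      _ = ∑ j, ∑ i, ∑ l, a i j * (B j l * a i l) := Finset.sum_comm
      _ = ∑ j, ∑ l, ∑ i, a i j * (B j l * a i l) :=
          Finset.sum_congr rfl fun j _ => Finset.sum_comm
      _ = ∑ j, ∑ l, B j l * P j l := by
          refine Finset.sum_congr rfl fun j _ => Finset.sum_congr rfl fun l _ => ?_
          rw [hP, Finset.mul_sum]
          exact Finset.sum_congr rfl fun i _ => by ring
  have key2 : ∑ j, ∑ l, P j l ^ 2 = N := by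
    calc ∑ j, ∑ l, P j l ^ 2
        = ∑ j, ∑ l, ∑ i, ∑ i', (a i j * a i l) * (a i' j * a i' l) := by
          refine Finset.sum_congr rfl fun j _ => Finset.sum_congr rfl fun l _ => ?_
          rw [hP, pow_two, Finset.sum_mul_sum]
      _ = ∑ j, ∑ i, ∑ l, ∑ i', (a i j * a i l) * (a i' j * a i' l) :=
          Finset.sum_congr rfl fun j _ => Finset.sum_comm
      _ = ∑ i, ∑ j, ∑ l, ∑ i', (a i j * a i l) * (a i' j * a i' l) := Finset.sum_comm
      _ = ∑ i, ∑ j, ∑ i', ∑ l, (a i j * a i l) * (a i' j * a i' l) :=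
          Finset.sum_congr rfl fun i _ => Finset.sum_congr rfl fun j _ => Finset.sum_comm
      _ = ∑ i, ∑ i', ∑ j, ∑ l, (a i j * a i l) * (a i' j * a i' l) :=
          Finset.sum_congr rfl fun i _ => Finset.sum_comm
      _ = ∑ i, ∑ i', (a i ⬝ᵥ a i') * (a i ⬝ᵥ a i') := by
          refine Finset.sum_congr rfl fun i _ => Finset.sum_congr rfl fun i' _ => ?_
          rw [dotProduct, Finset.sum_mul_sum]
          exact Finset.sum_congr rfl fun j _ => Finset.sum_congr rfl fun l _ => by ring
      _ = ∑ i : Fin N, (1:ℝ) := by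
          refine Finset.sum_congr rfl fun i _ => ?_
          rw [Finset.sum_eq_single i]
          · rw [horth i i]; simp
          · intro i' _ hne
            rw [horth i i']; simp [(Ne.symm hne)]
          · simp
      _ = N := by simp
  have hcs : (∑ j, ∑ l, B j l * P j l) ^ 2
      ≤ (∑ j, ∑ l, B j l ^ 2) * (∑ j, ∑ l, P j l ^ 2) := by
    have := Finset.sum_mul_sq_le_sq_mul_sq Finset.univ
      (fun p : Fin r × Fin r => B p.1 p.2) (fun p : Fin r × Fin r => P p.1 p.2)
    simpa [Fintype.sum_prod_type] using this
  have hfB : ∑ j, ∑ l, B j l ^ 2 = frob B ^ 2 := by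
    exact (frob_sq B).symm
  have hq : (∑ j, ∑ l, B j l * P j l) ≤ frob B * Real.sqrt N := by
    have h2 : (∑ j, ∑ l, B j l * P j l) ^ 2 ≤ (frob B * Real.sqrt N) ^ 2 := by
      rw [mul_pow, Real.sq_sqrt (Nat.cast_nonneg N), ← hfB]
      calc (∑ j, ∑ l, B j l * P j l) ^ 2 ≤ (∑ j, ∑ l, B j l ^ 2) * (∑ j, ∑ l, P j l ^ 2) := hcs
        _ = (∑ j, ∑ l, B j l ^ 2) * N := by rw [key2]
    have hy : 0 ≤ frob B * Real.sqrt N := mul_nonneg (frob_nonneg B) (Real.sqrt_nonneg _)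
    calc (∑ j, ∑ l, B j l * P j l) ≤ |∑ j, ∑ l, B j l * P j l| := le_abs_self _
      _ = Real.sqrt ((∑ j, ∑ l, B j l * P j l) ^ 2) := (Real.sqrt_sq_eq_abs _).symm
      _ ≤ Real.sqrt ((frob B * Real.sqrt N) ^ 2) := Real.sqrt_le_sqrt h2
      _ = frob B * Real.sqrt N := Real.sqrt_sq hy
  rw [key1]
  exact hq

lemma exists_unit_in_ker {d r : ℕ} (W : Matrix (Fin d) (Fin r) ℝ)
    (B : Matrix (Fin r) (Fin r) ℝ) {m : ℕ} (hm : W.rank + m = r) (hm1 : 1 ≤ m) :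
    ∃ a : Fin r → ℝ, a ⬝ᵥ a = 1 ∧ W *ᵥ a = 0 ∧
      a ⬝ᵥ (B *ᵥ a) ≤ frob B / Real.sqrt m := by
  classical
  set Φ := (WithLp.linearEquiv 2 ℝ (Fin r → ℝ)) with hΦ
  set T : EuclideanSpace ℝ (Fin r) →ₗ[ℝ] (Fin d → ℝ) :=
    W.mulVecLin.comp Φ.toLinearMap with hT
  set K := LinearMap.ker T with hK
  have hrange : LinearMap.range T = LinearMap.range W.mulVecLin := by
    rw [hT, LinearMap.range_comp, LinearEquiv.range, Submodule.map_top]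
  have hdim : finrank ℝ K = m := by
    have h1 := LinearMap.finrank_range_add_finrank_ker T
    rw [hrange, ← hK] at h1
    have h2 : finrank ℝ (EuclideanSpace ℝ (Fin r)) = r := by simp
    have h3 : finrank ℝ (LinearMap.range W.mulVecLin) = W.rank := rfl
    rw [h2, h3] at h1
    omega
  have hKfin : FiniteDimensional ℝ K := inferInstance
  set b := stdOrthonormalBasis ℝ K with hb
  set N := finrank ℝ K with hN
  set a : Fin N → Fin r → ℝ := fun i => Φ ((b i : EuclideanSpace ℝ (Fin r))) with ha
  have horth : ∀ i j, a i ⬝ᵥ a j = if i = j then (1:ℝ) else 0 := by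
    intro i j
    have := orthonormal_iff_ite.mp b.orthonormal i j
    rw [Submodule.coe_inner] at this
    rw [EuclideanSpace.inner_eq_star_dotProduct] at this
    rw [dotProduct_comm]
    simpa [ha, dotProduct, hΦ] using this
  have hker : ∀ i, W *ᵥ a i = 0 := by
    intro i
    have h := (b i).2
    exact LinearMap.mem_ker.mp h
  have havg := avg_quad_bound B a horth
  have hNpos : 0 < N := by omega
  haveI : Nonempty (Fin N) := ⟨⟨0, hNpos⟩⟩
  obtain ⟨i, -, hi⟩ := Finset.exists_le_of_sum_le
    (Finset.univ_nonempty (α := Fin N))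
    (g := fun _ => frob B / Real.sqrt m) (by
      calc ∑ i, a i ⬝ᵥ (B *ᵥ a i) ≤ frob B * Real.sqrt N := havg
        _ = ∑ _i : Fin N, frob B / Real.sqrt m := by
            rw [Finset.sum_const, Finset.card_univ, Fintype.card_fin]
            rw [show N = m from by omega, nsmul_eq_mul]
            have h1 : Real.sqrt m ≠ 0 := by
              have : (0:ℝ) < m := by exact_mod_cast hm1
              positivity
            field_simp
            rw [Real.sq_sqrt (Nat.cast_nonneg m)])
  exact ⟨a i, by simpa using horth i i, hker i, hi⟩

lemma frob_neg {m n : Type*} [Fintype m] [Fintype n] (A : Matrix m n ℝ) : frob (-A) = frob A := by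
  unfold frob; congr 1; simp

lemma minner_vecMulVec {d₁ d₂ : ℕ} (A : Matrix (Fin d₁) (Fin d₂) ℝ)
    (x : Fin d₁ → ℝ) (z : Fin d₂ → ℝ) :
    minner A (vecMulVec x z) = x ⬝ᵥ (A *ᵥ z) := by
  unfold minner
  simp only [vecMulVec_apply, dotProduct, mulVec, Finset.mul_sum]
  exact Finset.sum_congr rfl fun i _ => Finset.sum_congr rfl fun j _ => by ring

lemma minner_neg {d₁ d₂ : ℕ} (A B : Matrix (Fin d₁) (Fin d₂) ℝ) :
    minner A (-B) = -minner A B := by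
  unfold minner
  rw [← Finset.sum_neg_distrib]
  refine Finset.sum_congr rfl fun i _ => ?_
  rw [← Finset.sum_neg_distrib]
  exact Finset.sum_congr rfl fun j _ => by simp

lemma vecMulVec_mul_vecMulVec {d₁ d₂ r : ℕ} (x : Fin d₁ → ℝ) (z : Fin d₂ → ℝ)
    (a : Fin r → ℝ) (ha : a ⬝ᵥ a = 1) :
    vecMulVec x a * (vecMulVec z a)ᵀ = vecMulVec x z := by
  ext i j
  simp only [Matrix.mul_apply, vecMulVec_apply, transpose_apply]
  have h : ∀ l, x i * a l * (z j * a l) = (x i * z j) * (a l * a l) := fun l => by ring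
  rw [Finset.sum_congr rfl fun l _ => h l, ← Finset.mul_sum,
    show (∑ l, a l * a l) = 1 from ha, mul_one]

lemma frob_vecMulVec_sq {d r : ℕ} (w : Fin d → ℝ) (z : Fin r → ℝ) :
    frob (vecMulVec w z) ^ 2 = (w ⬝ᵥ w) * (z ⬝ᵥ z) := by
  rw [frob_sq]
  simp only [vecMulVec_apply, dotProduct]
  rw [Finset.sum_mul_sum]
  exact Finset.sum_congr rfl fun i _ => Finset.sum_congr rfl fun j _ => by ring

lemma second_term {d₁ d₂ r : ℕ}
    (U : Matrix (Fin d₁) (Fin r) ℝ) (V : Matrix (Fin d₂) (Fin r) ℝ)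
    (x : Fin d₁ → ℝ) (z : Fin d₂ → ℝ) (a : Fin r → ℝ) :
    U * (vecMulVec z a)ᵀ + (-(vecMulVec x a)) * Vᵀ
      = vecMulVec (U *ᵥ a) z - vecMulVec x (V *ᵥ a) := by
  ext i j
  simp only [Matrix.add_apply, Matrix.mul_apply, transpose_apply, vecMulVec_apply, Matrix.neg_apply,
    Matrix.sub_apply, mulVec, dotProduct]
  rw [Finset.sum_mul, Finset.mul_sum, sub_eq_add_neg, ← Finset.sum_neg_distrib]
  congr 1
  · exact Finset.sum_congr rfl fun l _ => by ring
  · exact Finset.sum_congr rfl fun l _ => by ring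

/-- A stationary point `(U,V)` of `f(U,V) = ½‖UVᵀ − M*‖_F²` with
`‖UᵀU − VᵀV‖_F ≤ ε` is either `ε`-close to a global minimum
(`‖UVᵀ − M*‖_F ≤ ε`) or a strict saddle point: some direction `(Δ_U, Δ_V)`
makes the Hessian quadratic form strictly negative. -/
theorem stationary_balanced_close_or_strict_saddle {d₁ d₂ r : ℕ}
    (M : Matrix (Fin d₁) (Fin d₂) ℝ) (hrank : M.rank ≤ r)
    (U : Matrix (Fin d₁) (Fin r) ℝ) (V : Matrix (Fin d₂) (Fin r) ℝ) (ε : ℝ)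
    (hstat₁ : (U * Vᵀ - M) * V = 0) (hstat₂ : (U * Vᵀ - M)ᵀ * U = 0)
    (hbal : frob (Uᵀ * U - Vᵀ * V) ≤ ε) :
    frob (U * Vᵀ - M) ≤ ε ∨
      ∃ (DU : Matrix (Fin d₁) (Fin r) ℝ) (DV : Matrix (Fin d₂) (Fin r) ℝ),
        2 * minner (U * Vᵀ - M) (DU * DVᵀ) + frob (U * DVᵀ + DU * Vᵀ) ^ 2 < 0 := by
  set R := U * Vᵀ - M with hR
  by_cases hfr : frob R ≤ ε
  · exact Or.inl hfr
  right
  push_neg at hfr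
  have hε0 : 0 ≤ ε := le_trans (frob_nonneg _) hbal
  have hfrpos : 0 < frob R := lt_of_le_of_lt hε0 hfr
  -- stationarity
  have hUR : Uᵀ * R = 0 := by
    have := congrArg transpose hstat₂
    simpa [transpose_mul] using this
  -- rank bookkeeping
  have s1 : U.rank + Vᵀ.rank ≤ Fintype.card (Fin r) + (U * Vᵀ).rank := sylvester U Vᵀ
  rw [Fintype.card_fin, rank_transpose] at s1
  have s2 : (U * Vᵀ).rank + (-R).rank ≤ (U * Vᵀ + -R).rank := by
    apply rank_add_rank_le_rank_add_of_orth
    · rw [transpose_mul, Matrix.mul_neg, Matrix.mul_assoc, hUR, Matrix.mul_zero, neg_zero]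
    · rw [transpose_neg, Matrix.mul_neg, Matrix.mul_assoc, ← transpose_mul, hstat₁,
        transpose_zero, Matrix.mul_zero, neg_zero]
  have s2' : (U * Vᵀ).rank + R.rank ≤ M.rank := by
    have hnr : (-R).rank = R.rank := by
      have h1 : ((-R)ᵀ * (-R)) = Rᵀ * R := by simp
      rw [← rank_transpose_mul_self (-R), h1, rank_transpose_mul_self]
    have hM : U * Vᵀ + -R = M := by rw [hR]; abel
    rw [hnr, hM] at s2
    exact s2
  have hUr : U.rank ≤ r := by simpa using U.rank_le_card_width
  have hVr : V.rank ≤ r := by simpa using V.rank_le_card_width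
  obtain ⟨σ, x, z, hσpos, hx1, hz1, hxRz, hfrob_le, hk1⟩ := top_singular R hfrpos
  set k := R.rank with hk
  have hcomb : U.rank + V.rank + k ≤ 2 * r := by omega
  -- helper numeric lemma
  have hnum : ∀ m : ℕ, 1 ≤ m → k ≤ 2 * m → ε / Real.sqrt m < 2 * σ := by
    intro m hm1 hk2m
    have hm0 : (0:ℝ) < m := by exact_mod_cast hm1
    have hsm : 0 < Real.sqrt m := Real.sqrt_pos.mpr hm0
    have h2m : Real.sqrt k ≤ Real.sqrt (2 * (m:ℝ)) := by
      apply Real.sqrt_le_sqrt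
      exact_mod_cast hk2m
    have hfle : frob R ≤ Real.sqrt (2 * (m:ℝ)) * σ :=
      le_trans hfrob_le (mul_le_mul_of_nonneg_right h2m hσpos.le)
    have hεlt : ε < Real.sqrt 2 * Real.sqrt m * σ := by
      rw [← Real.sqrt_mul (by norm_num : (0:ℝ) ≤ 2) (m:ℝ)]
      exact lt_of_lt_of_le hfr hfle
    rw [div_lt_iff₀ hsm]
    have hs2 : Real.sqrt 2 < 2 := by
      nlinarith [Real.sq_sqrt (show (0:ℝ) ≤ 2 by norm_num), Real.sqrt_nonneg 2]
    have h3 : Real.sqrt 2 * (Real.sqrt m * σ) ≤ 2 * (Real.sqrt m * σ) :=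
      mul_le_mul_of_nonneg_right hs2.le (by positivity)
    calc ε < Real.sqrt 2 * Real.sqrt m * σ := hεlt
      _ = Real.sqrt 2 * (Real.sqrt m * σ) := by ring
      _ ≤ 2 * (Real.sqrt m * σ) := h3
      _ = 2 * σ * Real.sqrt m := by ring
  -- quadratic reduction helper
  have quad_reduce : ∀ {d : ℕ} (P : Matrix (Fin d) (Fin r) ℝ) (a : Fin r → ℝ),
      (P *ᵥ a) ⬝ᵥ (P *ᵥ a) = a ⬝ᵥ ((Pᵀ * P) *ᵥ a) := by
    intro d P a
    rw [dotProduct_mulVec, ← mulVec_transpose, mulVec_mulVec, dotProduct_comm]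
  rcases le_total V.rank U.rank with hUV | hUV
  · -- use kernel of V
    set m := r - V.rank with hm
    have hmeq : V.rank + m = r := by omega
    have hm1 : 1 ≤ m := by omega
    have hk2m : k ≤ 2 * m := by omega
    obtain ⟨a, ha1, haker, haq⟩ := exists_unit_in_ker V (Uᵀ * U - Vᵀ * V) hmeq hm1
    refine ⟨-(vecMulVec x a), vecMulVec z a, ?_⟩
    have hDUDV : (-(vecMulVec x a)) * (vecMulVec z a)ᵀ = -(vecMulVec x z) := by
      rw [Matrix.neg_mul, vecMulVec_mul_vecMulVec x z a ha1]
    rw [hDUDV, minner_neg, minner_vecMulVec, hxRz]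
    rw [second_term U V x z a, haker]
    have hzero : vecMulVec x (0 : Fin d₂ → ℝ) = 0 := by
      ext i j; simp [vecMulVec_apply]
    rw [hzero, sub_zero, frob_vecMulVec_sq, hz1, mul_one]
    have e1 : (U *ᵥ a) ⬝ᵥ (U *ᵥ a) = a ⬝ᵥ ((Uᵀ * U - Vᵀ * V) *ᵥ a) := by
      have hVa : (Vᵀ * V) *ᵥ a = 0 := by rw [← mulVec_mulVec, haker, mulVec_zero]
      rw [quad_reduce U a, sub_mulVec, hVa, sub_zero]
    rw [e1]
    have hdiv : a ⬝ᵥ ((Uᵀ * U - Vᵀ * V) *ᵥ a) ≤ ε / Real.sqrt m := by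
      refine le_trans haq ?_
      have hsm : 0 < Real.sqrt m := Real.sqrt_pos.mpr (by exact_mod_cast hm1)
      gcongr
    have := hnum m hm1 hk2m
    linarith
  · -- use kernel of U
    set m := r - U.rank with hm
    have hmeq : U.rank + m = r := by omega
    have hm1 : 1 ≤ m := by omega
    have hk2m : k ≤ 2 * m := by omega
    obtain ⟨a, ha1, haker, haq⟩ := exists_unit_in_ker U (Vᵀ * V - Uᵀ * U) hmeq hm1
    refine ⟨-(vecMulVec x a), vecMulVec z a, ?_⟩
    have hDUDV : (-(vecMulVec x a)) * (vecMulVec z a)ᵀ = -(vecMulVec x z) := by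
      rw [Matrix.neg_mul, vecMulVec_mul_vecMulVec x z a ha1]
    rw [hDUDV, minner_neg, minner_vecMulVec, hxRz]
    rw [second_term U V x z a, haker]
    have hzero : vecMulVec (0 : Fin d₁ → ℝ) z = 0 := by
      ext i j; simp [vecMulVec_apply]
    rw [hzero, zero_sub]
    rw [show frob (-(vecMulVec x (V *ᵥ a))) = frob (vecMulVec x (V *ᵥ a)) from frob_neg _]
    rw [frob_vecMulVec_sq, hx1, one_mul]
    have e1 : (V *ᵥ a) ⬝ᵥ (V *ᵥ a) = a ⬝ᵥ ((Vᵀ * V - Uᵀ * U) *ᵥ a) := by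
      have hUa : (Uᵀ * U) *ᵥ a = 0 := by rw [← mulVec_mulVec, haker, mulVec_zero]
      rw [quad_reduce V a, sub_mulVec, hUa, sub_zero]
    rw [e1]
    have hfrneg : frob (Vᵀ * V - Uᵀ * U) = frob (Uᵀ * U - Vᵀ * V) := by
      rw [show Vᵀ * V - Uᵀ * U = -(Uᵀ * U - Vᵀ * V) from (neg_sub _ _).symm, frob_neg]
    have hdiv : a ⬝ᵥ ((Vᵀ * V - Uᵀ * U) *ᵥ a) ≤ ε / Real.sqrt m := by
      refine le_trans haq ?_
      rw [hfrneg]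
      have hsm : 0 < Real.sqrt m := Real.sqrt_pos.mpr (by exact_mod_cast hm1)
      gcongr
    have := hnum m hm1 hk2m
    linarith
end

section
/- Let U ∈ ℝ^{d₁×r}, V ∈ ℝ^{d₂×r}, M* ∈ ℝ^{d₁×d₂}, η ≥ 0, and define one gradient descent step U₊ = U − η(UVᵀ − M*)V and V₊ = V − η(UVᵀ − M*)ᵀU. Then ‖U₊ᵀU₊ − V₊ᵀV₊‖_F ≤ ‖UᵀU − VᵀV‖_F + η²·(‖U‖_F² + ‖V‖_F²)·‖UVᵀ − M*‖_F². (In particular, one GD step changes the balancedness quantity UᵀU − VᵀV only by an O(η²) term.) -/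
open Matrix

attribute [local instance] Matrix.frobeniusNormedAddCommGroup Matrix.frobeniusNormedSpace Matrix.frobeniusIsBoundedSMul

lemma frob_eq_norm {m n : Type*} [Fintype m] [Fintype n] (A : Matrix m n ℝ) :
    frob A = ‖A‖ := by
  rw [frob, Matrix.frobenius_norm_def, Real.sqrt_eq_rpow]
  congr 1
  simp [Real.rpow_natCast, sq_abs]

/-- One gradient descent step on `f(U,V) = ½‖UVᵀ − M*‖_F²` changes the balancedness
quantity `UᵀU − VᵀV` by at most an `η²` term. -/
theorem gd_step_balancedness {d₁ d₂ r : ℕ}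
    (U : Matrix (Fin d₁) (Fin r) ℝ) (V : Matrix (Fin d₂) (Fin r) ℝ)
    (M : Matrix (Fin d₁) (Fin d₂) ℝ) (η : ℝ) (hη : 0 ≤ η)
    (Up : Matrix (Fin d₁) (Fin r) ℝ) (Vp : Matrix (Fin d₂) (Fin r) ℝ)
    (hUp : Up = U - η • ((U * Vᵀ - M) * V))
    (hVp : Vp = V - η • ((U * Vᵀ - M)ᵀ * U)) :
    frob (Upᵀ * Up - Vpᵀ * Vp)
      ≤ frob (Uᵀ * U - Vᵀ * V)
        + η ^ 2 * (frob U ^ 2 + frob V ^ 2) * frob (U * Vᵀ - M) ^ 2 := by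
  set E := U * Vᵀ - M with hE
  have key : Upᵀ * Up - Vpᵀ * Vp
      = (Uᵀ * U - Vᵀ * V) + (η ^ 2) • (Vᵀ * Eᵀ * (E * V) - Uᵀ * E * (Eᵀ * U)) := by
    subst hUp hVp
    simp only [transpose_sub, transpose_smul, transpose_mul, transpose_transpose,
      Matrix.sub_mul, Matrix.mul_sub, Matrix.smul_mul, Matrix.mul_smul, smul_smul,
      smul_sub, Matrix.mul_assoc, sq]
    abel
  rw [key]
  simp only [frob_eq_norm]
  calc ‖(Uᵀ * U - Vᵀ * V) + (η ^ 2) • (Vᵀ * Eᵀ * (E * V) - Uᵀ * E * (Eᵀ * U))‖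
      ≤ ‖Uᵀ * U - Vᵀ * V‖ + ‖(η ^ 2) • (Vᵀ * Eᵀ * (E * V) - Uᵀ * E * (Eᵀ * U))‖ :=
        norm_add_le _ _
    _ ≤ ‖Uᵀ * U - Vᵀ * V‖ + η ^ 2 * (‖U‖ ^ 2 + ‖V‖ ^ 2) * ‖E‖ ^ 2 := by
        gcongr
        rw [norm_smul, Real.norm_eq_abs, abs_of_nonneg (sq_nonneg η), mul_assoc]
        gcongr η ^ 2 * ?_
        have h1 : ‖Vᵀ * Eᵀ * (E * V)‖ ≤ ‖Vᵀ‖ * ‖Eᵀ‖ * (‖E‖ * ‖V‖) := by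
          refine (Matrix.frobenius_norm_mul _ _).trans ?_
          have := Matrix.frobenius_norm_mul Vᵀ Eᵀ
          have := Matrix.frobenius_norm_mul E V
          nlinarith [norm_nonneg (Vᵀ * Eᵀ), norm_nonneg (E * V), norm_nonneg Vᵀ,
            norm_nonneg Eᵀ, norm_nonneg E, norm_nonneg V]
        have h2 : ‖Uᵀ * E * (Eᵀ * U)‖ ≤ ‖Uᵀ‖ * ‖E‖ * (‖Eᵀ‖ * ‖U‖) := by
          refine (Matrix.frobenius_norm_mul _ _).trans ?_
          have := Matrix.frobenius_norm_mul Uᵀ E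
          have := Matrix.frobenius_norm_mul Eᵀ U
          nlinarith [norm_nonneg (Uᵀ * E), norm_nonneg (Eᵀ * U), norm_nonneg Uᵀ,
            norm_nonneg E, norm_nonneg Eᵀ, norm_nonneg U]
        calc ‖Vᵀ * Eᵀ * (E * V) - Uᵀ * E * (Eᵀ * U)‖
            ≤ ‖Vᵀ * Eᵀ * (E * V)‖ + ‖Uᵀ * E * (Eᵀ * U)‖ := norm_sub_le _ _
          _ ≤ ‖Vᵀ‖ * ‖Eᵀ‖ * (‖E‖ * ‖V‖) + ‖Uᵀ‖ * ‖E‖ * (‖Eᵀ‖ * ‖U‖) := add_le_add h1 h2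
          _ = (‖U‖ ^ 2 + ‖V‖ ^ 2) * ‖E‖ ^ 2 := by
              rw [Matrix.frobenius_norm_transpose U, Matrix.frobenius_norm_transpose V,
                Matrix.frobenius_norm_transpose E]
              ring
end

section
/- Let U, U* ∈ ℝ^{d₁×r}, V, V* ∈ ℝ^{d₂×r}, set M = UVᵀ and M* = U*V*ᵀ, and let R ∈ ℝ^{r×r} be orthogonal (RRᵀ = I). Suppose (U, V) satisfies the first-order stationarity conditions (M − M*)V = 0 and (M − M*)ᵀU = 0. Then with Δ_U = U − U*R and Δ_V = V − V*R, we have ⟨M − M*, Δ_U Δ_Vᵀ⟩ = −‖M − M*‖_F². -/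
open Matrix

lemma minner_eq_trace {m n : Type*} [Fintype m] [Fintype n] (A B : Matrix m n ℝ) :
    minner A B = (Aᵀ * B).trace := by
  simp only [minner, Matrix.trace, Matrix.diag, Matrix.mul_apply, Matrix.transpose_apply]
  rw [Finset.sum_comm]

lemma frob_sq_eq_trace {m n : Type*} [Fintype m] [Fintype n] (A : Matrix m n ℝ) :
    frob A ^ 2 = (Aᵀ * A).trace := by
  rw [frob, Real.sq_sqrt (by positivity)]
  rw [← minner_eq_trace, minner]
  simp [sq]

/-- At a first-order stationary point `(U,V)` of `½‖UVᵀ − M*‖_F²` with `M* = U*V*ᵀ`,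
for an orthogonal `R` and `Δ_U = U − U*R`, `Δ_V = V − V*R`, one has
`⟨M − M*, Δ_U Δ_Vᵀ⟩ = −‖M − M*‖_F²`. -/
theorem stationary_inner_eq_neg_sq {d₁ d₂ r : ℕ}
    (U Us : Matrix (Fin d₁) (Fin r) ℝ) (V Vs : Matrix (Fin d₂) (Fin r) ℝ)
    (R : Matrix (Fin r) (Fin r) ℝ) (hR : R * Rᵀ = 1)
    (hstat₁ : (U * Vᵀ - Us * Vsᵀ) * V = 0)
    (hstat₂ : (U * Vᵀ - Us * Vsᵀ)ᵀ * U = 0) :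
    minner (U * Vᵀ - Us * Vsᵀ) ((U - Us * R) * (V - Vs * R)ᵀ)
      = -(frob (U * Vᵀ - Us * Vsᵀ) ^ 2) := by
  set E := U * Vᵀ - Us * Vsᵀ with hEdef
  rw [minner_eq_trace, frob_sq_eq_trace]
  -- expand the product
  have hexp : (U - Us * R) * (V - Vs * R)ᵀ
      = U * Vᵀ - U * (Rᵀ * Vsᵀ) - Us * R * Vᵀ + Us * Vsᵀ := by
    have h4 : Us * R * (Rᵀ * Vsᵀ) = Us * Vsᵀ := by
      rw [← Matrix.mul_assoc, Matrix.mul_assoc Us R Rᵀ, hR, Matrix.mul_one]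
    rw [Matrix.transpose_sub, Matrix.transpose_mul]
    rw [Matrix.mul_sub, Matrix.sub_mul, Matrix.sub_mul, h4]
    abel
  rw [hexp]
  have h1 : Eᵀ * (U * Vᵀ) = 0 := by
    rw [← Matrix.mul_assoc, hstat₂, Matrix.zero_mul]
  have h2 : Eᵀ * (U * (Rᵀ * Vsᵀ)) = 0 := by
    rw [← Matrix.mul_assoc, hstat₂, Matrix.zero_mul]
  have h3 : (Eᵀ * (Us * R * Vᵀ)).trace = 0 := by
    rw [← Matrix.mul_assoc, Matrix.trace_mul_comm, ← Matrix.mul_assoc,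
      ← Matrix.transpose_mul, hstat₁]
    simp
  have h4 : Eᵀ * (Us * Vsᵀ) = Eᵀ * (U * Vᵀ) - Eᵀ * E := by
    rw [← Matrix.mul_sub, hEdef]
    congr 1
    abel
  rw [Matrix.mul_add, Matrix.mul_sub, Matrix.mul_sub, h1, h2, h4, h1]
  rw [Matrix.trace_add, Matrix.trace_sub, Matrix.trace_sub, Matrix.trace_sub, h3]
  simp
end

section
/- Let u*, v* be unit vectors in ℝ^{d₁}, ℝ^{d₂}, σ₁ > 0, M* = σ₁ u* v*ᵀ, and η ∈ ℝ. Given u ∈ ℝ^{d₁}, v ∈ ℝ^{d₂}, define the gradient descent step u₊ = u − η(uvᵀ − M*)v and v₊ = v − η(vuᵀ − M*ᵀ)u. Then with α = uᵀu*, β = vᵀv*, α_⊥ = ‖u − (uᵀu*)u*‖₂, β_⊥ = ‖v − (vᵀv*)v*‖₂ (and analogously α₊, β₊, α₊,⊥, β₊,⊥ defined from u₊, v₊), the following recursions hold: α₊ = (1 − η(β² + β_⊥²))α + ησ₁β, β₊ = (1 − η(α² + α_⊥²))β + ησ₁α, α₊,⊥ = (1 − η(β² + β_⊥²))·α_⊥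 whenever 1 − η(β² + β_⊥²) ≥ 0, and β₊,⊥ = (1 − η(α² + α_⊥²))·β_⊥ whenever 1 − η(α² + α_⊥²) ≥ 0. -/
lemma rank1_gd_aux {d₁ d₂ : ℕ}
    (us : Fin d₁ → ℝ) (vs : Fin d₂ → ℝ)
    (hus : ∑ i, us i ^ 2 = 1) (hvs : ∑ j, vs j ^ 2 = 1)
    (σ₁ η : ℝ)
    (u : Fin d₁ → ℝ) (v : Fin d₂ → ℝ) (up : Fin d₁ → ℝ)
    (hup : ∀ i, up i = u i - η * ∑ j, (u i * v j - σ₁ * us i * vs j) * v j)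
    (α β αp α' β' αp' : ℝ)
    (hα : α = ∑ i, u i * us i) (hβ : β = ∑ j, v j * vs j)
    (hαp : αp = ∑ i, up i * us i)
    (hα' : α' = Real.sqrt (∑ i, (u i - α * us i) ^ 2))
    (hβ' : β' = Real.sqrt (∑ j, (v j - β * vs j) ^ 2))
    (hαp' : αp' = Real.sqrt (∑ i, (up i - αp * us i) ^ 2)) :
    αp = (1 - η * (β ^ 2 + β' ^ 2)) * α + η * σ₁ * β ∧
    (0 ≤ 1 - η * (β ^ 2 + β' ^ 2) → αp' = (1 - η * (β ^ 2 + β' ^ 2)) * α') := by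
  have hβ'2 : β' ^ 2 = ∑ j, (v j - β * vs j) ^ 2 := by
    rw [hβ']
    exact Real.sq_sqrt (Finset.sum_nonneg fun j _ => sq_nonneg _)
  have hS : ∑ j, v j ^ 2 = β ^ 2 + β' ^ 2 := by
    have hexp : ∑ j, (v j - β * vs j) ^ 2
        = (∑ j, v j ^ 2) - 2 * β * (∑ j, v j * vs j) + β ^ 2 * (∑ j, vs j ^ 2) := by
      rw [Finset.mul_sum, Finset.mul_sum, ← Finset.sum_sub_distrib, ← Finset.sum_add_distrib]
      exact Finset.sum_congr rfl fun j _ => by ring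
    rw [← hβ, hvs] at hexp
    rw [hβ'2, hexp]; ring
  set c : ℝ := 1 - η * (β ^ 2 + β' ^ 2) with hc
  have hupc : ∀ i, up i = c * u i + η * σ₁ * β * us i := by
    intro i
    have hsum : ∑ j, (u i * v j - σ₁ * us i * vs j) * v j
        = u i * (∑ j, v j ^ 2) - σ₁ * us i * (∑ j, v j * vs j) := by
      rw [Finset.mul_sum, Finset.mul_sum, ← Finset.sum_sub_distrib]
      exact Finset.sum_congr rfl fun j _ => by ring
    rw [hup i, hsum, hS, ← hβ, hc]; ring
  have hαpval : αp = c * α + η * σ₁ * β := by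
    rw [hαp]
    calc ∑ i, up i * us i = ∑ i, (c * (u i * us i) + η * σ₁ * β * us i ^ 2) :=
          Finset.sum_congr rfl fun i _ => by rw [hupc i]; ring
      _ = c * (∑ i, u i * us i) + η * σ₁ * β * (∑ i, us i ^ 2) := by
          rw [Finset.sum_add_distrib, ← Finset.mul_sum, ← Finset.mul_sum]
      _ = c * α + η * σ₁ * β := by rw [← hα, hus, mul_one]
  refine ⟨hαpval, fun hcpos => ?_⟩
  have hdiff : ∀ i, up i - αp * us i = c * (u i - α * us i) := by
    intro i; rw [hupc i, hαpval]; ring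
  have : ∑ i, (up i - αp * us i) ^ 2 = c ^ 2 * ∑ i, (u i - α * us i) ^ 2 := by
    rw [Finset.mul_sum]
    exact Finset.sum_congr rfl fun i _ => by rw [hdiff i]; ring
  rw [hαp', this, Real.sqrt_mul (sq_nonneg c), Real.sqrt_sq hcpos, ← hα']

/-- One gradient descent step for rank-1 matrix factorization `½‖uvᵀ − σ₁u*v*ᵀ‖_F²`,
written in the coordinates `α = uᵀu*`, `β = vᵀv*`,
`α_⊥ = ‖(I − u*u*ᵀ)u‖₂`, `β_⊥ = ‖(I − v*v*ᵀ)v‖₂`: the explicit recursions for the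
signal components and the complement-space magnitudes hold (the latter whenever the
corresponding contraction factor is nonnegative). -/
theorem rank1_gd_coordinate_dynamics {d₁ d₂ : ℕ}
    (us : Fin d₁ → ℝ) (vs : Fin d₂ → ℝ)
    (hus : ∑ i, us i ^ 2 = 1) (hvs : ∑ j, vs j ^ 2 = 1)
    (σ₁ : ℝ) (hσ : 0 < σ₁) (η : ℝ)
    (u : Fin d₁ → ℝ) (v : Fin d₂ → ℝ) (up : Fin d₁ → ℝ) (vp : Fin d₂ → ℝ)
    (hup : ∀ i, up i = u i - η * ∑ j, (u i * v j - σ₁ * us i * vs j) * v j)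
    (hvp : ∀ j, vp j = v j - η * ∑ i, (v j * u i - σ₁ * vs j * us i) * u i)
    (α β αp βp α' β' αp' βp' : ℝ)
    (hα : α = ∑ i, u i * us i) (hβ : β = ∑ j, v j * vs j)
    (hαp : αp = ∑ i, up i * us i) (hβp : βp = ∑ j, vp j * vs j)
    (hα' : α' = Real.sqrt (∑ i, (u i - α * us i) ^ 2))
    (hβ' : β' = Real.sqrt (∑ j, (v j - β * vs j) ^ 2))
    (hαp' : αp' = Real.sqrt (∑ i, (up i - αp * us i) ^ 2))
    (hβp' : βp' = Real.sqrt (∑ j, (vp j - βp * vs j) ^ 2)) :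
    αp = (1 - η * (β ^ 2 + β' ^ 2)) * α + η * σ₁ * β ∧
    βp = (1 - η * (α ^ 2 + α' ^ 2)) * β + η * σ₁ * α ∧
    (0 ≤ 1 - η * (β ^ 2 + β' ^ 2) → αp' = (1 - η * (β ^ 2 + β' ^ 2)) * α') ∧
    (0 ≤ 1 - η * (α ^ 2 + α' ^ 2) → βp' = (1 - η * (α ^ 2 + α' ^ 2)) * β') := by
  obtain ⟨h1, h3⟩ := rank1_gd_aux us vs hus hvs σ₁ η u v up hup α β αp α' β' αp'
    hα hβ hαp hα' hβ' hαp'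
  obtain ⟨h2, h4⟩ := rank1_gd_aux vs us hvs hus σ₁ η v u vp hvp β α βp β' α' βp'
    hβ hα hβp hβ' hα' hβp'
  exact ⟨h1, h2, h3, h4⟩
end

section
/- Let σ₁ > 0, 0 < η ≤ 1/σ₁, and let α, β, α_⊥, β_⊥ be reals with α > 0, β > 0, α² + β² ≤ σ₁/2, and ξ := α_⊥² + β_⊥² ≤ σ₁/6. Define α₊ = (1 − η(β² + β_⊥²))α + ησ₁β and β₊ = (1 − η(α² + α_⊥²))β + ησ₁α. Then (1 + ησ₁/3)·(α + β) ≤ α₊ + β₊ ≤ (1 + ησ₁)·(α + β). (This is the exponential growth of the signal strength during the saddle-escaping stage of gradient descent for rank-1 matrix factorization.) -/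
/-- Exponential growth of the signal strength during the saddle-escaping stage of
gradient descent for rank-1 matrix factorization. -/
theorem rank1_stage1_growth (σ₁ η α β α' β' : ℝ)
    (hσ : 0 < σ₁) (hη0 : 0 < η) (hη : η ≤ 1 / σ₁)
    (hα : 0 < α) (hβ : 0 < β)
    (hsig : α ^ 2 + β ^ 2 ≤ σ₁ / 2)
    (hξ : α' ^ 2 + β' ^ 2 ≤ σ₁ / 6)
    (αp βp : ℝ)
    (hαp : αp = (1 - η * (β ^ 2 + β' ^ 2)) * α + η * σ₁ * β)
    (hβp : βp = (1 - η * (α ^ 2 + α' ^ 2)) * β + η * σ₁ * α) :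
    (1 + η * σ₁ / 3) * (α + β) ≤ αp + βp ∧ αp + βp ≤ (1 + η * σ₁) * (α + β) := by
  subst hαp hβp
  have key : (β^2+β'^2)*α + (α^2+α'^2)*β ≤ 2*σ₁/3*(α+β) := by
    nlinarith [sq_nonneg α', sq_nonneg β', hα.le, hβ.le, mul_pos hα hβ]
  constructor
  · nlinarith [mul_le_mul_of_nonneg_left key hη0.le, mul_pos hη0 hσ]
  · nlinarith [mul_pos hη0 hα, mul_pos hη0 hβ, sq_nonneg α', sq_nonneg β', sq_nonneg α, sq_nonneg β]
end

section
/- Let σ₁ > 0, 0 < η ≤ 1/σ₁, and let α, β, α_⊥, β_⊥ be reals with α > 0, β > 0, α² + β² ≤ σ₁/2, ξ := α_⊥² + β_⊥² ≤ σ₁/6, and |α − β| ≤ (99/101)·(α + β). Define α₊ = (1 − η(β² + β_⊥²))α + ησ₁β and β₊ = (1 − η(α² + α_⊥²))β + ησ₁α. Then |α₊ − β₊| ≤ (99/101)·(α₊ + β₊). (This shows gradient descent keeps the signal strengths of the two layers within a constant factor of each other during the saddle-escaping stage.) -/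
/-- Gradient descent keeps the signal strengths of the two layers within a constant
factor of each other during the saddle-escaping stage (rank-1 matrix factorization). -/
theorem rank1_stage1_ratio (σ₁ η α β α' β' : ℝ)
    (hσ : 0 < σ₁) (hη0 : 0 < η) (hη : η ≤ 1 / σ₁)
    (hα : 0 < α) (hβ : 0 < β)
    (hsig : α ^ 2 + β ^ 2 ≤ σ₁ / 2)
    (hξ : α' ^ 2 + β' ^ 2 ≤ σ₁ / 6)
    (hratio : |α - β| ≤ (99 / 101) * (α + β))
    (αp βp : ℝ)
    (hαp : αp = (1 - η * (β ^ 2 + β' ^ 2)) * α + η * σ₁ * β)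
    (hβp : βp = (1 - η * (α ^ 2 + α' ^ 2)) * β + η * σ₁ * α) :
    |αp - βp| ≤ (99 / 101) * (αp + βp) := by
  have hησ : η * σ₁ ≤ 1 := by
    rw [le_div_iff₀ hσ] at hη; linarith
  obtain ⟨h1, h2⟩ := abs_le.mp hratio
  subst hαp hβp
  rw [abs_le]
  have ht : (0:ℝ) ≤ 1 - η * σ₁ + η * (α * β) :=
    by nlinarith [mul_pos hα hβ, hη0.le]
  have hE : 100 * (β' ^ 2 * α + α' ^ 2 * β) ≤ 99 * ((α + β) * (σ₁ - α * β)) := by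
    nlinarith [sq_nonneg α', sq_nonneg β', sq_nonneg (α - β), mul_pos hα hβ,
      mul_nonneg (sq_nonneg α') hβ.le, mul_nonneg (sq_nonneg β') hα.le,
      mul_le_mul_of_nonneg_left hξ (add_nonneg hα.le hβ.le)]
  constructor
  · nlinarith [mul_nonneg ht (by linarith : (0:ℝ) ≤ 99/101 * (α + β) + (α - β)),
      mul_le_mul_of_nonneg_left hE hη0.le,
      mul_nonneg hη0.le (mul_nonneg (sq_nonneg β') hα.le),
      mul_nonneg hη0.le (mul_nonneg (sq_nonneg α') hβ.le)]
  · nlinarith [mul_nonneg ht (by linarith : (0:ℝ) ≤ 99/101 * (α + β) - (α - β)),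
      mul_le_mul_of_nonneg_left hE hη0.le,
      mul_nonneg hη0.le (mul_nonneg (sq_nonneg β') hα.le),
      mul_nonneg hη0.le (mul_nonneg (sq_nonneg α') hβ.le)]
end

section
/- Let σ₁ > 0, c₁ > 0, η > 0, and let α, β, α_⊥, β_⊥ be reals with α² ≥ c₁σ₁, β² ≥ c₁σ₁, η(α² + α_⊥²) ≤ 1, η(β² + β_⊥²) ≤ 1, and ηc₁σ₁ ≤ 1. Define ξ = α_⊥² + β_⊥² and ξ₊ = (1 − η(β² + β_⊥²))²·α_⊥² + (1 − η(α² + α_⊥²))²·β_⊥². Then ξ₊ ≤ (1 − ηc₁σ₁)·ξ. (This is the linear shrinkage of the complement-space magnitude during the local convergence stage of gradient descent for rank-1 matrix factorization.) -/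
/-- Linear shrinkage of the complement-space magnitude during the local convergence
stage of gradient descent for rank-1 matrix factorization. -/
theorem rank1_stage2_xi_shrink (σ₁ c₁ η α β α' β' : ℝ)
    (hσ : 0 < σ₁) (hc₁ : 0 < c₁) (hη : 0 < η)
    (hα : c₁ * σ₁ ≤ α ^ 2) (hβ : c₁ * σ₁ ≤ β ^ 2)
    (hηα : η * (α ^ 2 + α' ^ 2) ≤ 1) (hηβ : η * (β ^ 2 + β' ^ 2) ≤ 1)
    (hηc : η * (c₁ * σ₁) ≤ 1)
    (ξ ξp : ℝ)
    (hξ : ξ = α' ^ 2 + β' ^ 2)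
    (hξp : ξp = (1 - η * (β ^ 2 + β' ^ 2)) ^ 2 * α' ^ 2
              + (1 - η * (α ^ 2 + α' ^ 2)) ^ 2 * β' ^ 2) :
    ξp ≤ (1 - η * (c₁ * σ₁)) * ξ := by
  subst hξ hξp
  have hA : (1 - η * (β ^ 2 + β' ^ 2)) ^ 2 ≤ 1 - η * (c₁ * σ₁) := by
    have hx : η * (c₁ * σ₁) ≤ η * (β ^ 2 + β' ^ 2) := by nlinarith [sq_nonneg β']
    have h0 : 0 ≤ η * (β ^ 2 + β' ^ 2) := by nlinarith
    nlinarith [mul_nonneg h0 (by linarith : (0:ℝ) ≤ 1 - η * (β ^ 2 + β' ^ 2))]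
  have hB : (1 - η * (α ^ 2 + α' ^ 2)) ^ 2 ≤ 1 - η * (c₁ * σ₁) := by
    have hx : η * (c₁ * σ₁) ≤ η * (α ^ 2 + α' ^ 2) := by nlinarith [sq_nonneg α']
    have h0 : 0 ≤ η * (α ^ 2 + α' ^ 2) := by nlinarith
    nlinarith [mul_nonneg h0 (by linarith : (0:ℝ) ≤ 1 - η * (α ^ 2 + α' ^ 2))]
  nlinarith [sq_nonneg α', sq_nonneg β', mul_le_mul_of_nonneg_right hA (sq_nonneg α'),
    mul_le_mul_of_nonneg_right hB (sq_nonneg β')]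
end

section
/- Let σ₁ > 0, c₁ > 0, η > 0, and let α, β, α_⊥, β_⊥ be reals with α² ≥ c₁σ₁, β² ≥ c₁σ₁, 0 < αβ ≤ σ₁, η(α² + β²) ≤ 1, and η·|αβ·h + α²β_⊥² + β²α_⊥² + α_⊥²β_⊥²| ≤ (α² + β²)/2, where h = αβ − σ₁ and ξ = α_⊥² + β_⊥². Define h₊ = (1 − η(α² + β²) + η²(αβ·h + α²β_⊥² + β²α_⊥² + α_⊥²β_⊥²))·h − η·αβ·ξ + η²σ₁·α_⊥²β_⊥². Then, assuming h ≤ 0 and η²σ₁α_⊥²β_⊥² ≤ η·αβ·ξ, we have |h₊| ≤ (1 − ηc₁σ₁)·|h| + ησ₁·ξ. (This is the linear convergence of the signal error during the local convergence stage of gradient descent for rank-1 matrix factorization.) -/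
/-- Linear convergence of the signal error during the local convergence stage of
gradient descent for rank-1 matrix factorization. -/
theorem rank1_stage2_h_converge (σ₁ c₁ η α β α' β' : ℝ)
    (hσ : 0 < σ₁) (hc₁ : 0 < c₁) (hη : 0 < η)
    (hα : c₁ * σ₁ ≤ α ^ 2) (hβ : c₁ * σ₁ ≤ β ^ 2)
    (hαβ0 : 0 < α * β) (hαβσ : α * β ≤ σ₁)
    (hηab : η * (α ^ 2 + β ^ 2) ≤ 1)
    (h ξ : ℝ)
    (hh : h = α * β - σ₁) (hξ : ξ = α' ^ 2 + β' ^ 2)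
    (hηX : η * |α * β * h + α ^ 2 * β' ^ 2 + β ^ 2 * α' ^ 2 + α' ^ 2 * β' ^ 2|
            ≤ (α ^ 2 + β ^ 2) / 2)
    (hp : ℝ)
    (hhp : hp = (1 - η * (α ^ 2 + β ^ 2)
            + η ^ 2 * (α * β * h + α ^ 2 * β' ^ 2 + β ^ 2 * α' ^ 2 + α' ^ 2 * β' ^ 2)) * h
          - η * (α * β) * ξ + η ^ 2 * σ₁ * (α' ^ 2 * β' ^ 2))
    (hneg : h ≤ 0)
    (hnoise : η ^ 2 * σ₁ * (α' ^ 2 * β' ^ 2) ≤ η * (α * β) * ξ) :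
    |hp| ≤ (1 - η * (c₁ * σ₁)) * |h| + η * σ₁ * ξ := by
  obtain ⟨X, hXdef⟩ : ∃ X : ℝ,
      X = α * β * h + α ^ 2 * β' ^ 2 + β ^ 2 * α' ^ 2 + α' ^ 2 * β' ^ 2 := ⟨_, rfl⟩
  rw [← hXdef] at hηX hhp
  have hX1 : η * X ≤ (α ^ 2 + β ^ 2) / 2 :=
    le_trans (by nlinarith [le_abs_self X, abs_nonneg X]) hηX
  have hX2 : -((α ^ 2 + β ^ 2) / 2) ≤ η * X := by
    nlinarith [neg_abs_le X, abs_nonneg X]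
  have hξ0 : 0 ≤ ξ := by rw [hξ]; positivity
  have hcs : 2 * (c₁ * σ₁) ≤ α ^ 2 + β ^ 2 := by linarith
  obtain ⟨A, hA⟩ : ∃ A : ℝ, A = 1 - η * (α ^ 2 + β ^ 2) + η ^ 2 * X := ⟨_, rfl⟩
  obtain ⟨N, hN⟩ : ∃ N : ℝ, N = η * (α * β) * ξ - η ^ 2 * σ₁ * (α' ^ 2 * β' ^ 2) := ⟨_, rfl⟩
  have hN0 : 0 ≤ N := by rw [hN]; linarith
  have hNle : N ≤ η * σ₁ * ξ := by
    rw [hN]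
    have h1 : α * β * ξ ≤ σ₁ * ξ := mul_le_mul_of_nonneg_right hαβσ hξ0
    have h1' := mul_le_mul_of_nonneg_left h1 hη.le
    have h2 : (0:ℝ) ≤ η ^ 2 * σ₁ * (α' ^ 2 * β' ^ 2) := by positivity
    have : η * (α * β) * ξ ≤ η * σ₁ * ξ := by
      calc η * (α * β) * ξ = η * (α * β * ξ) := by ring
        _ ≤ η * (σ₁ * ξ) := h1'
        _ = η * σ₁ * ξ := by ring
    linarith
  have e1 : η ^ 2 * X = η * (η * X) := by ring
  have e2 := mul_le_mul_of_nonneg_left hX1 hη.le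
  have e3 := mul_le_mul_of_nonneg_left hX2 hη.le
  have e4 := mul_le_mul_of_nonneg_left hcs hη.le
  have e5 := mul_le_mul_of_nonneg_left hηab hη.le
  have hAub : A ≤ 1 - η * (c₁ * σ₁) := by rw [hA]; linarith
  have hAlb : -(1 - η * (c₁ * σ₁)) ≤ A := by rw [hA]; linarith
  have hAabs : |A| ≤ 1 - η * (c₁ * σ₁) := abs_le.mpr ⟨hAlb, hAub⟩
  have hhpA : hp = A * h - N := by rw [hhp, hA, hN]; ring
  calc |hp| = |A * h - N| := by rw [hhpA]
    _ ≤ |A * h| + |N| := abs_sub _ _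
    _ = |A| * |h| + N := by rw [abs_mul, abs_of_nonneg hN0]
    _ ≤ (1 - η * (c₁ * σ₁)) * |h| + η * σ₁ * ξ := by
        have := mul_le_mul_of_nonneg_right hAabs (abs_nonneg h)
        linarith
end
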